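/- arXiv:2509.00871 — 5 statements merged into one kernel-verified Lean document; each statement's English description precedes it below -/
import Mathlib

section
/- Let u ∈ V be a nonzero vector and let H_u = {x ∈ V : ⟨u,x⟩ = 0}. (1) If Q(u) = 0, then every x ∈ H_u with Q(x) = 0 is a scalar multiple of u. (2) If Q(u) > 0, then H_u = Span{v, v'} for some two linearly independent vectors v, v' with Q(v) = Q(v') = 0. (3) If Q(u) < 0, then every nonzero x ∈ H_u satisfies Q(x) > 0. -/
open scoped NNReal

noncomputable section

/-- The ambient vector space `V = ℝ³`. -/
abbrev V : Type := Fin 3 → ℝ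

/-- The symmetric bilinear form with `⟨αᵢ,αⱼ⟩ = 1` if `i = j` and `-1` otherwise. -/
def B (x y : V) : ℝ := 2 * (∑ i, x i * y i) - (∑ i, x i) * (∑ i, y i)

/-- The associated quadratic form. -/
def Q (x : V) : ℝ := B x x

/-- The simple roots `α₁, α₂, α₃` (the standard basis vectors). -/
def α (i : Fin 3) : V := Pi.single i 1

/-- The set of simple roots. -/
def Δ : Set V := Set.range α

/-- `f` is the reflection `r_{αᵢ} : x ↦ x - 2⟨αᵢ,x⟩αᵢ` for some `i` (note `⟨αᵢ,αᵢ⟩ = 1`). -/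
def IsSimpleReflection (f : V ≃ₗ[ℝ] V) : Prop :=
  ∃ i : Fin 3, ∀ x : V, f x = x - (2 * B (α i) x) • α i

/-- The group `W ≤ GL(V)` generated by the three simple reflections:
the standard reflection representation of `U₃`. -/
def W : Subgroup (V ≃ₗ[ℝ] V) := Subgroup.closure {f | IsSimpleReflection f}

/-- The root system `Φ = {w·αᵢ : w ∈ W, i ∈ {1,2,3}}`. -/
def Φ : Set V := {x | ∃ w ∈ W, ∃ i : Fin 3, x = w (α i)}

/-- `Span_{≥0}(X)`: the set of nonnegative linear combinations of elements of `X`. -/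
def nnspan (X : Set V) : Set V := (Submodule.span ℝ≥0 X : Set V)

/-- The positive roots `Φ⁺ = Φ ∩ Span_{≥0}(Δ)`. -/
def Φpos : Set V := Φ ∩ nnspan Δ

/-- `R ⊆ Φ⁺` is closed if for all `a, b ∈ R`, `Span_{≥0}{a,b} ∩ Φ⁺ ⊆ R`. -/
def IsClosedSet (R : Set V) : Prop := ∀ a ∈ R, ∀ b ∈ R, nnspan {a, b} ∩ Φpos ⊆ R

/-- `R` is a biclosed subset of `Φ⁺`. -/
def IsBiclosed (R : Set V) : Prop := R ⊆ Φpos ∧ IsClosedSet R ∧ IsClosedSet (Φpos \ R)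

namespace OPTAux

/-- Coordinates diagonalizing the form: `Q (mk a b c) = a² + b² - c²`. -/
def mk (a b c : ℝ) : V := ![a + c, (b + c)/2, (c - b)/2]

lemma mk_eta (x : V) : mk (x 0 - x 1 - x 2) (x 1 - x 2) (x 1 + x 2) = x := by
  funext i; fin_cases i <;> simp [mk] <;> ring

lemma B_mk (a b c a' b' c' : ℝ) :
    B (mk a b c) (mk a' b' c') = a*a' + b*b' - c*c' := by
  simp [B, mk, Fin.sum_univ_three]; ring

lemma mk_add (a b c a' b' c' : ℝ) :
    mk a b c + mk a' b' c' = mk (a+a') (b+b') (c+c') := by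
  funext i; fin_cases i <;> simp [mk] <;> ring

lemma mk_smul (r a b c : ℝ) : r • mk a b c = mk (r*a) (r*b) (r*c) := by
  funext i; fin_cases i <;> simp [mk] <;> ring

lemma mk_zero : mk 0 0 0 = 0 := by
  funext i; fin_cases i <;> simp [mk]

lemma mk_eq_zero {a b c : ℝ} (h : mk a b c = 0) : a = 0 ∧ b = 0 ∧ c = 0 := by
  have h0 := congrFun h 0
  have h1 := congrFun h 1
  have h2 := congrFun h 2
  simp [mk] at h0 h1 h2
  refine ⟨by linarith, by linarith, by linarith⟩

lemma mk_congr {a b c a' b' c' : ℝ} (h1 : a = a') (h2 : b = b') (h3 : c = c') :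
    mk a b c = mk a' b' c' := by rw [h1, h2, h3]

lemma B_bilin (x y z : V) (a b : ℝ) : B x (a • y + b • z) = a * B x y + b * B x z := by
  simp [B, Fin.sum_univ_three, Pi.add_apply, Pi.smul_apply, smul_eq_mul]; ring

lemma part1_scalar (p q r X Y Z : ℝ) (hr : r ≠ 0) (hu : p^2+q^2 = r^2)
    (hx : X^2+Y^2 = Z^2) (hB : p*X+q*Y = r*Z) : r*X = Z*p ∧ r*Y = Z*q := by
  have hcs : (p*Y - q*X)^2 = 0 := by
    linear_combination (X^2+Y^2)*hu + r^2*hx - (p*X+q*Y+r*Z)*hB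
  have heq : p*Y - q*X = 0 := by
    have := sq_eq_zero_iff.mp hcs; linarith [this]
  have h1 : p*(r*X - Z*p) + q*(r*Y - Z*q) = 0 := by linear_combination r*hB - Z*hu
  have h2 : q*(r*X - Z*p) - p*(r*Y - Z*q) = 0 := by linear_combination (-r)*heq
  have hr2 : r^2 ≠ 0 := pow_ne_zero 2 hr
  have hA : r^2*(r*X - Z*p) = 0 := by linear_combination p*h1 + q*h2 - (r*X - Z*p)*hu
  have hBb : r^2*(r*Y - Z*q) = 0 := by linear_combination q*h1 - p*h2 - (r*Y - Z*q)*hu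
  constructor
  · have := (mul_eq_zero.mp hA).resolve_left hr2; linarith
  · have := (mul_eq_zero.mp hBb).resolve_left hr2; linarith

lemma part3_scalar (p q r X Y Z : ℝ) (hu : p^2+q^2 - r^2 < 0)
    (hB : p*X+q*Y = r*Z) (hx : ¬(X = 0 ∧ Y = 0 ∧ Z = 0)) : 0 < X^2+Y^2-Z^2 := by
  have hr : r ≠ 0 := by intro h; rw [h] at hu; nlinarith [sq_nonneg p, sq_nonneg q]
  by_cases hXY : X = 0 ∧ Y = 0
  · obtain ⟨hX, hY⟩ := hXY
    exfalso; apply hx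
    refine ⟨hX, hY, ?_⟩
    rw [hX, hY] at hB; simp at hB
    rcases hB with h | h
    · exact absurd h hr
    · exact h
  · have hXY2 : 0 < X^2 + Y^2 := by
      rcases not_and_or.mp hXY with h | h <;> positivity
    by_contra hcon
    push_neg at hcon
    have hZ : X^2+Y^2 ≤ Z^2 := by linarith
    have hr2 : (0:ℝ) < r^2 - p^2 - q^2 := by linarith
    have hB2 : (p*X+q*Y)^2 = r^2*Z^2 := by rw [hB]; ring
    nlinarith [sq_nonneg (p*Y - q*X), mul_pos hr2 hXY2,
      mul_nonneg (sq_nonneg r) (sub_nonneg.mpr hZ), hB2]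

end OPTAux

open OPTAux in
/-- Properties of the orthogonal plane `H_u = {x : ⟨u,x⟩ = 0}` of a nonzero vector `u`. -/
theorem orthogonal_plane_trichotomy (u : V) (hu : u ≠ 0) :
    (Q u = 0 → ∀ x : V, B u x = 0 → Q x = 0 → ∃ c : ℝ, x = c • u) ∧
    (0 < Q u → ∃ v v' : V, LinearIndependent ℝ ![v, v'] ∧ Q v = 0 ∧ Q v' = 0 ∧
      {x : V | B u x = 0} = (Submodule.span ℝ {v, v'} : Set V)) ∧
    (Q u < 0 → ∀ x : V, B u x = 0 → x ≠ 0 → 0 < Q x) := by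
  obtain ⟨p, q, r, hu_mk⟩ : ∃ p q r, u = mk p q r := ⟨_, _, _, (mk_eta u).symm⟩
  have hQu : Q u = p^2 + q^2 - r^2 := by rw [Q, hu_mk, B_mk]; ring
  have hune : ¬(p = 0 ∧ q = 0 ∧ r = 0) := by
    rintro ⟨h1, h2, h3⟩
    exact hu (by rw [hu_mk, h1, h2, h3, mk_zero])
  refine ⟨?_, ?_, ?_⟩
  · -- Part 1
    intro hQ0 x hBx hQx
    obtain ⟨X, Y, Z, hx_mk⟩ : ∃ X Y Z, x = mk X Y Z := ⟨_, _, _, (mk_eta x).symm⟩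
    have hQx' : X^2 + Y^2 = Z^2 := by
      have : Q x = X^2 + Y^2 - Z^2 := by rw [Q, hx_mk, B_mk]; ring
      linarith [this ▸ hQx]
    have hBx' : p*X + q*Y = r*Z := by
      rw [hu_mk, hx_mk, B_mk] at hBx; linarith
    have hu' : p^2 + q^2 = r^2 := by linarith [hQu ▸ hQ0]
    have hr : r ≠ 0 := by
      intro h
      rw [h] at hu'
      have hp : p = 0 := by nlinarith [sq_nonneg p, sq_nonneg q]
      have hq : q = 0 := by nlinarith [sq_nonneg p, sq_nonneg q]
      exact hune ⟨hp, hq, h⟩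
    obtain ⟨hA, hBb⟩ := part1_scalar p q r X Y Z hr hu' hQx' hBx'
    refine ⟨Z/r, ?_⟩
    rw [hx_mk, hu_mk, mk_smul]
    refine mk_congr ?_ ?_ ?_
    · field_simp; linear_combination hA
    · field_simp; linear_combination hBb
    · field_simp
  · -- Part 2
    intro hQpos
    have hs : r^2 < p^2 + q^2 := by linarith [hQu ▸ hQpos]
    set s : ℝ := p^2 + q^2 with hsdef
    have hspos : 0 < s := lt_of_le_of_lt (sq_nonneg r) hs
    set d : ℝ := Real.sqrt s with hddef
    set e : ℝ := Real.sqrt (s*(s - r^2)) with hedef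
    have hd2 : d^2 = s := Real.sq_sqrt hspos.le
    have he2 : e^2 = s*(s - r^2) := Real.sq_sqrt (by nlinarith)
    have hdpos : 0 < d := Real.sqrt_pos.mpr hspos
    have hepos : 0 < e := Real.sqrt_pos.mpr (by nlinarith)
    set v : V := mk (e*(-q) + d*(p*r)) (e*p + d*(q*r)) (d*s) with hv
    set v' : V := mk (e*(-q) - d*(p*r)) (e*p - d*(q*r)) (-(d*s)) with hv'
    set w1 : V := mk (-q) p 0 with hw1
    set w2 : V := mk (p*r) (q*r) s with hw2
    refine ⟨v, v', ?_, ?_, ?_, ?_⟩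
    · -- linear independence
      rw [LinearIndependent.pair_iff]
      intro a b hab
      rw [hv, hv', mk_smul, mk_smul, mk_add] at hab
      obtain ⟨h1, h2, h3⟩ := mk_eq_zero hab
      have hds : d*s ≠ 0 := (mul_pos hdpos hspos).ne'
      have hab3 : (a - b)*(d*s) = 0 := by linear_combination h3
      have hba : a = b := by
        have := (mul_eq_zero.mp hab3).resolve_right hds; linarith
      subst hba
      have hq0 : a*q*(2*e) = 0 := by linear_combination -h1
      have hp0 : a*p*(2*e) = 0 := by linear_combination h2
      have h2e : (2:ℝ)*e ≠ 0 := by positivity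
      have haq : a*q = 0 := (mul_eq_zero.mp hq0).resolve_right h2e
      have hap : a*p = 0 := (mul_eq_zero.mp hp0).resolve_right h2e
      have has : a*s = 0 := by linear_combination p*hap + q*haq + a*hsdef
      have ha : a = 0 := (mul_eq_zero.mp has).resolve_right hspos.ne'
      exact ⟨ha, ha⟩
    · -- Q v = 0
      rw [Q, hv, B_mk]
      linear_combination (q^2 + p^2)*he2 + (p^2*r^2 + q^2*r^2 - s^2)*hd2 + s^2*hsdef
    · -- Q v' = 0
      rw [Q, hv', B_mk]
      linear_combination (q^2 + p^2)*he2 + (p^2*r^2 + q^2*r^2 - s^2)*hd2 + s^2*hsdef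
    · -- span equality
      have hspan : Submodule.span ℝ {v, v'} = Submodule.span ℝ {w1, w2} := by
        apply le_antisymm
        · rw [Submodule.span_le]
          rintro z (rfl | rfl)
          · exact Submodule.mem_span_pair.mpr ⟨e, d, by
              rw [hv, hw1, hw2, mk_smul, mk_smul, mk_add]
              exact mk_congr (by ring) (by ring) (by ring)⟩
          · exact Submodule.mem_span_pair.mpr ⟨e, -d, by
              rw [hv', hw1, hw2, mk_smul, mk_smul, mk_add]
              exact mk_congr (by ring) (by ring) (by ring)⟩
        · rw [Submodule.span_le]
          rintro z (rfl | rfl)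
          · exact Submodule.mem_span_pair.mpr ⟨1/(2*e), 1/(2*e), by
              rw [hv, hv', mk_smul, mk_smul, mk_add, hw1]
              exact mk_congr (by field_simp; ring) (by field_simp; ring)
                (by field_simp; ring)⟩
          · exact Submodule.mem_span_pair.mpr ⟨1/(2*d), -(1/(2*d)), by
              rw [hv, hv', mk_smul, mk_smul, mk_add, hw2]
              exact mk_congr (by field_simp; ring) (by field_simp; ring)
                (by field_simp; ring)⟩
      rw [hspan]
      ext x
      simp only [Set.mem_setOf_eq, SetLike.mem_coe]
      obtain ⟨X, Y, Z, hx_mk⟩ : ∃ X Y Z, x = mk X Y Z := ⟨_, _, _, (mk_eta x).symm⟩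
      constructor
      · intro hBx
        have hc : p*X + q*Y - r*Z = 0 := by
          rw [hu_mk, hx_mk, B_mk] at hBx; linarith
        refine Submodule.mem_span_pair.mpr ⟨(p*Y - q*X)/s, Z/s, ?_⟩
        rw [hw1, hw2, mk_smul, mk_smul, mk_add, hx_mk]
        refine mk_congr ?_ ?_ ?_
        · field_simp; linear_combination (-p)*hc - X*hsdef
        · field_simp; linear_combination (-q)*hc - Y*hsdef
        · field_simp; ring
      · intro hx
        obtain ⟨a, b, hab⟩ := Submodule.mem_span_pair.mp hx
        rw [← hab, B_bilin]
        have hw1u : B u w1 = 0 := by rw [hu_mk, hw1, B_mk]; ring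
        have hw2u : B u w2 = 0 := by
          rw [hu_mk, hw2, B_mk]; linear_combination (-r)*hsdef
        rw [hw1u, hw2u]; ring
  · -- Part 3
    intro hQneg x hBx hxne
    obtain ⟨X, Y, Z, hx_mk⟩ : ∃ X Y Z, x = mk X Y Z := ⟨_, _, _, (mk_eta x).symm⟩
    have hBx' : p*X + q*Y = r*Z := by
      rw [hu_mk, hx_mk, B_mk] at hBx; linarith
    have hxne' : ¬(X = 0 ∧ Y = 0 ∧ Z = 0) := by
      rintro ⟨h1, h2, h3⟩
      exact hxne (by rw [hx_mk, h1, h2, h3, mk_zero])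
    have := part3_scalar p q r X Y Z (by linarith [hQu ▸ hQneg]) hBx' hxne'
    have hQx : Q x = X^2 + Y^2 - Z^2 := by rw [Q, hx_mk, B_mk]; ring
    linarith [hQx ▸ this]
end
end

section
/- Let U₃ be the rank-3 universal Coxeter group with generating set S = {s₁, s₂, s₃}, and for J ⊆ S let U_J denote the subgroup generated by J. If J and J' are nonempty proper subsets of S and w, v ∈ U₃ satisfy w U_J w⁻¹ = v U_{J'} v⁻¹, then J = J' and w U_J = v U_{J'}. Consequently, each nontrivial parabolic subgroup of U₃ stabilizes (under left multiplication) a unique parabolic coset. -/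
open scoped Pointwise

/-- The relations `sᵢ² = 1` defining the rank-3 universal Coxeter group. -/
def U3Rels : Set (FreeGroup (Fin 3)) := {r | ∃ i : Fin 3, r = FreeGroup.of i * FreeGroup.of i}

/-- The rank-3 universal Coxeter group `U₃ = ⟨s₁,s₂,s₃ ∣ s₁² = s₂² = s₃² = 1⟩`. -/
abbrev U3 : Type := PresentedGroup U3Rels

/-- The Coxeter generators of `U₃`. -/
def s (i : Fin 3) : U3 := PresentedGroup.of i

/-- The standard parabolic subgroup `U_J` generated by `{sᵢ : i ∈ J}`. -/
def UJ (J : Set (Fin 3)) : Subgroup U3 := Subgroup.closure (s '' J)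

namespace U3Aux

/-- One-step action of a generator on a word: cancel or prepend. -/
def actL (i : Fin 3) : List (Fin 3) → List (Fin 3)
  | [] => [i]
  | a :: t => if a = i then t else i :: a :: t

lemma actL_chain' (i : Fin 3) {l : List (Fin 3)} (h : l.Chain' (· ≠ ·)) :
    (actL i l).Chain' (· ≠ ·) := by
  cases l with
  | nil => simp [actL, List.Chain']
  | cons a t =>
    by_cases hai : a = i
    · simpa [actL, hai, List.Chain'] using h.tail
    · rw [actL, if_neg hai]; simp only [List.Chain', List.isChain_cons_cons]
      exact ⟨fun h' => hai h'.symm, h⟩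

lemma actL_actL (i : Fin 3) {l : List (Fin 3)} (h : l.Chain' (· ≠ ·)) :
    actL i (actL i l) = l := by
  cases l with
  | nil => simp [actL]
  | cons a t =>
    by_cases hai : a = i
    · subst hai
      rw [actL, if_pos rfl]
      cases t with
      | nil => simp [actL]
      | cons b t' =>
        have hba : b ≠ a := (List.isChain_cons_cons.1 h).1.symm
        simp [actL, hba]
    · rw [actL, if_neg hai, actL, if_pos rfl]

/-- The set of reduced words. -/
def Red : Type := {l : List (Fin 3) // l.Chain' (· ≠ ·)}

/-- The action of a generator on reduced words. -/
def act (i : Fin 3) : Red → Red := fun l => ⟨actL i l.1, actL_chain' i l.2⟩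

lemma act_involutive (i : Fin 3) : Function.Involutive (act i) := fun l =>
  Subtype.ext (actL_actL i l.2)

/-- The generator's permutation of reduced words. -/
def actPerm (i : Fin 3) : Equiv.Perm Red := (act_involutive i).toPerm

/-- The homomorphism from `U3` to permutations of reduced words. -/
def ρ : U3 →* Equiv.Perm Red :=
  PresentedGroup.toGroup (f := actPerm) (by
    rintro r ⟨i, rfl⟩
    rw [map_mul, FreeGroup.lift_apply_of]
    ext x
    exact (act_involutive i) x)

/-- The normal form of an element of `U3`. -/
def nf (w : U3) : List (Fin 3) := (ρ w ⟨[], List.isChain_nil⟩).1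

lemma nf_chain' (w : U3) : (nf w).Chain' (· ≠ ·) := (ρ w ⟨[], List.isChain_nil⟩).2

lemma nf_one : nf 1 = [] := by
  simp [nf]; rfl

lemma nf_s_mul (i : Fin 3) (w : U3) : nf (s i * w) = actL i (nf w) := by
  have : ρ (s i) = actPerm i := PresentedGroup.toGroup.of _
  simp only [nf, map_mul, Equiv.Perm.mul_apply, this]
  rfl

lemma s_mul_s (i : Fin 3) : s i * s i = 1 := by
  have : (s i * s i : U3) = PresentedGroup.mk U3Rels (FreeGroup.of i * FreeGroup.of i) := by
    rw [map_mul]; rfl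
  rw [this]
  exact (QuotientGroup.eq_one_iff _).2
    (Subgroup.subset_normalClosure ⟨i, rfl⟩)

lemma s_inv (i : Fin 3) : (s i)⁻¹ = s i :=
  inv_eq_of_mul_eq_one_right (s_mul_s i)

lemma prod_actL (i : Fin 3) (m : List (Fin 3)) :
    ((actL i m).map s).prod = s i * (m.map s).prod := by
  cases m with
  | nil => simp [actL]
  | cons a t =>
    by_cases hai : a = i
    · subst hai
      rw [actL, if_pos rfl]
      simp [← mul_assoc, s_mul_s]
    · rw [actL, if_neg hai]
      simp

/-- Key: the product of the normal form recovers the element. -/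
lemma prod_nf (w : U3) : ((nf w).map s).prod = w := by
  have main : ∀ w : U3, ∀ v : U3, ((nf (w * v)).map s).prod = w * ((nf v).map s).prod := by
    intro w
    have hw : w ∈ Subgroup.closure (Set.range (PresentedGroup.of : Fin 3 → U3)) := by
      rw [PresentedGroup.closure_range_of]; trivial
    refine Subgroup.closure_induction
      (p := fun w _ => ∀ v : U3, ((nf (w * v)).map s).prod = w * ((nf v).map s).prod)
      ?_ ?_ ?_ ?_ hw
    · rintro x ⟨i, rfl⟩ v
      rw [show (PresentedGroup.of i : U3) = s i from rfl, nf_s_mul, prod_actL]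
    · intro v; rw [one_mul, one_mul]
    · intro x y _ _ hx hy v
      rw [mul_assoc, hx (y * v), hy v, mul_assoc]
    · intro x _ hx v
      have := hx (x⁻¹ * v)
      rw [mul_inv_cancel_left] at this
      rw [this, inv_mul_cancel_left]
  have := main w 1
  simpa [nf_one] using this

lemma nf_prod {l : List (Fin 3)} (h : l.Chain' (· ≠ ·)) : nf ((l.map s).prod) = l := by
  induction l with
  | nil => simpa using nf_one
  | cons i t ih =>
    have ht : t.Chain' (· ≠ ·) := h.tail
    have : ((i :: t).map s).prod = s i * (t.map s).prod := by simp
    rw [this, nf_s_mul, ih ht]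
    cases t with
    | nil => simp [actL]
    | cons b t' =>
      have hbi : b ≠ i := (List.isChain_cons_cons.1 h).1.symm
      simp [actL, hbi]

lemma prod_map_s_reverse (l : List (Fin 3)) :
    ((l.reverse.map s).prod) = ((l.map s).prod)⁻¹ := by
  induction l with
  | nil => simp
  | cons i t ih =>
    rw [List.reverse_cons, List.map_append, List.prod_append, ih]
    simp [s_inv i, mul_inv_rev]

lemma nf_inv (w : U3) : nf w⁻¹ = (nf w).reverse := by
  have h1 : w⁻¹ = (((nf w).reverse).map s).prod := by
    rw [prod_map_s_reverse, prod_nf]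
  have h2 : ((nf w).reverse).Chain' (· ≠ ·) :=
    List.isChain_reverse.2 ((nf_chain' w).imp (fun _ _ h => h.symm))
  rw [h1, nf_prod h2]

lemma mem_actL {a i : Fin 3} {m : List (Fin 3)} : a ∈ actL i m → a = i ∨ a ∈ m := by
  cases m with
  | nil =>
    intro h
    exact Or.inl (List.mem_singleton.1 h)
  | cons b t =>
    intro h
    by_cases hbi : b = i
    · rw [actL, if_pos hbi] at h
      exact Or.inr (List.mem_cons_of_mem b h)
    · rw [actL, if_neg hbi] at h
      rcases List.mem_cons.1 h with h1 | h1
      · exact Or.inl h1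
      · exact Or.inr h1

lemma nf_mul_subset (x v : U3) : ∀ a ∈ nf (x * v), a ∈ nf x ∨ a ∈ nf v := by
  have aux : ∀ (l : List (Fin 3)) (v : U3) (a : Fin 3),
      a ∈ nf ((l.map s).prod * v) → a ∈ l ∨ a ∈ nf v := by
    intro l
    induction l with
    | nil => intro v a ha; simp at ha; exact Or.inr ha
    | cons i t ih =>
      intro v a ha
      have : ((i :: t).map s).prod * v = s i * ((t.map s).prod * v) := by
        simp [mul_assoc]
      rw [this, nf_s_mul] at ha
      rcases mem_actL ha with h | h
      · exact Or.inl (h ▸ (List.mem_cons_self (a := i) (l := t)))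
      · rcases ih v a h with h' | h'
        · exact Or.inl (List.mem_cons_of_mem i h')
        · exact Or.inr h'
  intro a ha
  have := aux (nf x) v a (by rwa [prod_nf])
  exact this

lemma nf_s (i : Fin 3) : nf (s i) = [i] := by
  have := nf_s_mul i 1
  simpa [nf_one, actL] using this

lemma mem_UJ_iff {J : Set (Fin 3)} {w : U3} : w ∈ UJ J ↔ ∀ a ∈ nf w, a ∈ J := by
  constructor
  · intro hw
    refine Subgroup.closure_induction
      (p := fun w _ => ∀ a ∈ nf w, a ∈ J) ?_ ?_ ?_ ?_ hw
    · rintro x ⟨j, hj, rfl⟩ a ha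
      rw [nf_s] at ha
      simpa using (List.mem_singleton.1 ha) ▸ hj
    · intro a ha; rw [nf_one] at ha; simp at ha
    · intro x y _ _ hx hy a ha
      rcases nf_mul_subset x y a ha with h | h
      · exact hx a h
      · exact hy a h
    · intro x _ hx a ha
      rw [nf_inv] at ha
      exact hx a (List.mem_reverse.1 ha)
  · intro hl
    rw [← prod_nf w]
    refine Subgroup.list_prod_mem _ ?_
    intro x hx
    rcases List.mem_map.1 hx with ⟨a, ha, rfl⟩
    exact Subgroup.subset_closure ⟨a, hl a ha, rfl⟩

lemma exists_split {α : Type*} (P : α → Prop) :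
    ∀ (l : List α), (¬ ∀ a ∈ l, P a) →
      ∃ p k b, l = p ++ k :: b ∧ ¬ P k ∧ ∀ a ∈ b, P a := by
  intro l
  induction l using List.reverseRecOn with
  | nil => intro h; exact absurd (by simp) h
  | append_singleton m a ih =>
    intro h
    by_cases hPa : P a
    · have hm : ¬ ∀ x ∈ m, P x := by
        intro hall
        apply h
        intro x hx
        rcases List.mem_append.1 hx with h' | h'
        · exact hall x h'
        · rwa [List.mem_singleton.1 h']
      obtain ⟨p, k, b, heq, hk, hb⟩ := ih hm
      refine ⟨p, k, b ++ [a], by rw [heq]; simp, hk, ?_⟩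
      intro x hx
      rcases List.mem_append.1 hx with h' | h'
      · exact hb x h'
      · rwa [List.mem_singleton.1 h']
    · exact ⟨m, a, [], by simp, hPa, by simp⟩

/-- Core lemma: if `u` conjugates some `s j` (`j ∈ J`) into `U_J` for all `j ∈ J`,
then `u ∈ U_J`. -/
lemma mem_of_conj (J : Set (Fin 3)) (hJne : J.Nonempty) (u : U3)
    (hu : ∀ j ∈ J, u * s j * u⁻¹ ∈ UJ J) : u ∈ UJ J := by
  by_contra hnot
  rw [mem_UJ_iff] at hnot
  obtain ⟨p, k, b, hsplit, hk, hb⟩ := exists_split (· ∈ J) (nf u) hnot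
  obtain ⟨j, hj⟩ := hJne
  set B : U3 := (b.map s).prod with hB
  have hBmem : B ∈ UJ J := by
    refine Subgroup.list_prod_mem _ ?_
    intro x hx
    rcases List.mem_map.1 hx with ⟨a, ha, rfl⟩
    exact Subgroup.subset_closure ⟨a, hb a ha, rfl⟩
  have hsj : s j ∈ UJ J := Subgroup.subset_closure ⟨j, hj, rfl⟩
  have hC : B * s j * B⁻¹ ∈ UJ J := mul_mem (mul_mem hBmem hsj) (inv_mem hBmem)
  have hcJ : ∀ a ∈ nf (B * s j * B⁻¹), a ∈ J := mem_UJ_iff.1 hC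
  have hcne : nf (B * s j * B⁻¹) ≠ [] := by
    intro h0
    have h1 : B * s j * B⁻¹ = 1 := by
      rw [← prod_nf (B * s j * B⁻¹), h0]; simp
    have h2 : s j = 1 := by
      have := congrArg (fun x => B⁻¹ * x * B) h1
      simpa [mul_assoc] using this
    have := congrArg nf h2
    rw [nf_s, nf_one] at this
    simp at this
  -- reducedness of the pieces
  have hred : (p ++ k :: b).Chain' (· ≠ ·) := hsplit ▸ nf_chain' u
  have hpk : (p ++ [k]).Chain' (· ≠ ·) :=
    hred.prefix ⟨b, by simp⟩
  have hkp : (k :: p.reverse).Chain' (· ≠ ·) := by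
    have : ((p ++ [k]).reverse).Chain' (· ≠ ·) :=
      List.isChain_reverse.2 (hpk.imp (fun _ _ h => h.symm))
    simpa using this
  -- the big reduced word
  obtain ⟨c0, ct, hcc⟩ : ∃ c0 ct, nf (B * s j * B⁻¹) = c0 :: ct := by
    cases hcc : nf (B * s j * B⁻¹) with
    | nil => exact absurd hcc hcne
    | cons c0 ct => exact ⟨c0, ct, rfl⟩
  have hcJ' : ∀ a ∈ c0 :: ct, a ∈ J := hcc ▸ hcJ
  have hcred : (c0 :: ct).Chain' (· ≠ ·) := hcc ▸ nf_chain' _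
  have hc0J : c0 ∈ J := hcJ' c0 List.mem_cons_self
  have hlastJ : (c0 :: ct).getLast (by simp) ∈ J := hcJ' _ (List.getLast_mem _)
  set L : List (Fin 3) := (p ++ [k]) ++ ((c0 :: ct) ++ (k :: p.reverse)) with hL
  have hLred : L.Chain' (· ≠ ·) := by
    rw [hL]; simp only [List.Chain']; rw [List.isChain_append]
    refine ⟨hpk, ?_, ?_⟩
    · rw [List.isChain_append]
      refine ⟨hcred, hkp, ?_⟩
      intro x hx y hy
      rw [List.head?_cons, Option.mem_def, Option.some_inj] at hy
      obtain ⟨_, hxl⟩ := List.mem_getLast?_eq_getLast hx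
      subst hy
      rw [hxl]
      intro hxy
      exact hk (hxy ▸ hlastJ)
    · intro x hx y hy
      rw [List.getLast?_concat, Option.mem_def, Option.some_inj] at hx
      rw [List.cons_append, List.head?_cons, Option.mem_def, Option.some_inj] at hy
      subst hx
      subst hy
      intro hxy
      exact hk (hxy ▸ hc0J)
  -- identify the conjugate with the big word
  have hu_eq : u = ((p ++ [k]).map s).prod * B := by
    rw [hB, ← List.prod_append, ← List.map_append]
    have : p ++ [k] ++ b = p ++ k :: b := by simp
    rw [this, ← hsplit, prod_nf]
  have hconj : u * s j * u⁻¹ = (L.map s).prod := by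
    have hAinv : (((p ++ [k]).map s).prod)⁻¹ = ((k :: p.reverse).map s).prod := by
      rw [← prod_map_s_reverse]
      congr 1
      simp
    have hCprod : B * s j * B⁻¹ = ((c0 :: ct).map s).prod := by
      rw [← hcc, prod_nf]
    calc u * s j * u⁻¹
        = ((p ++ [k]).map s).prod * (B * s j * B⁻¹) * (((p ++ [k]).map s).prod)⁻¹ := by
          rw [hu_eq]; group
      _ = ((p ++ [k]).map s).prod * ((c0 :: ct).map s).prod *
            ((k :: p.reverse).map s).prod := by rw [hCprod, hAinv]
      _ = (L.map s).prod := by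
          rw [hL]; simp [List.prod_append, mul_assoc]
  have hknf : k ∈ nf (u * s j * u⁻¹) := by
    rw [hconj, nf_prod hLred, hL]
    simp
  exact hk (mem_UJ_iff.1 (hu j hj) k hknf)

/-- The abelianization-style homomorphism to `(ℤ/2)³`. -/
def φ : U3 →* (Fin 3 → Multiplicative (ZMod 2)) :=
  PresentedGroup.toGroup (f := fun i => Pi.mulSingle i (Multiplicative.ofAdd 1)) (by
    rintro r ⟨i, rfl⟩
    rw [map_mul, FreeGroup.lift_apply_of]
    have h2 : (Multiplicative.ofAdd (1 : ZMod 2)) * Multiplicative.ofAdd 1 = 1 := by decide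
    rw [← Pi.mulSingle_mul, h2, Pi.mulSingle_one])

lemma φ_s (i : Fin 3) : φ (s i) = Pi.mulSingle i (Multiplicative.ofAdd 1) :=
  PresentedGroup.toGroup.of _

lemma φ_UJ {K : Set (Fin 3)} {x : U3} (hx : x ∈ UJ K) {i : Fin 3} (hi : i ∉ K) :
    φ x i = 1 := by
  refine Subgroup.closure_induction (p := fun x _ => φ x i = 1) ?_ ?_ ?_ ?_ hx
  · rintro y ⟨j, hj, rfl⟩
    rw [φ_s]
    have hij : i ≠ j := fun h => hi (h ▸ hj)
    exact Pi.mulSingle_eq_of_ne hij _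
  · simp
  · intro a b _ _ ha hb
    rw [map_mul, Pi.mul_apply, ha, hb, mul_one]
  · intro a _ ha
    rw [map_inv, Pi.inv_apply, ha, inv_one]

lemma subset_of_conj_eq {J₁ J₂ : Set (Fin 3)} {w₁ v₁ : U3}
    (h : Subgroup.map (MulAut.conj w₁).toMonoidHom (UJ J₁)
        = Subgroup.map (MulAut.conj v₁).toMonoidHom (UJ J₂)) : J₁ ⊆ J₂ := by
  intro j hj
  have hsj : s j ∈ UJ J₁ := Subgroup.subset_closure ⟨j, hj, rfl⟩
  have h1 : w₁ * s j * w₁⁻¹ ∈ Subgroup.map (MulAut.conj v₁).toMonoidHom (UJ J₂) := by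
    rw [← h]
    exact ⟨s j, hsj, by simp [MulAut.conj_apply]⟩
  obtain ⟨y, hy, hy2⟩ := h1
  simp only [MulEquiv.coe_toMonoidHom, MulAut.conj_apply] at hy2
  -- φ (w s j w⁻¹) = φ (s j), φ (v y v⁻¹) = φ y
  have hφ : φ y = φ (s j) := by
    have := congrArg φ hy2
    simp only [map_mul, map_inv] at this
    have l1 : φ v₁ * φ y * (φ v₁)⁻¹ = φ y := by
      rw [mul_comm (φ v₁) (φ y), mul_assoc, mul_inv_cancel, mul_one]
    have l2 : φ w₁ * φ (s j) * (φ w₁)⁻¹ = φ (s j) := by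
      rw [mul_comm (φ w₁) (φ (s j)), mul_assoc, mul_inv_cancel, mul_one]
    rw [l1, l2] at this
    exact this
  by_contra hjJ₂
  have h0 : φ y j = 1 := φ_UJ hy hjJ₂
  rw [hφ, φ_s, Pi.mulSingle_eq_same] at h0
  exact absurd h0 (by decide)

end U3Aux

/-- If two conjugates `w U_J w⁻¹ = v U_{J'} v⁻¹` of standard parabolic subgroups
(generated by nonempty proper subsets of the generators) coincide, then `J = J'` and
the parabolic cosets `w U_J` and `v U_{J'}` coincide. Consequently, each nontrivial
parabolic subgroup of `U₃` stabilizes a unique parabolic coset. -/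
theorem parabolic_subgroup_unique_coset (J J' : Set (Fin 3))
    (hJne : J.Nonempty) (hJpr : J ≠ Set.univ)
    (hJ'ne : J'.Nonempty) (hJ'pr : J' ≠ Set.univ) (w v : U3)
    (h : Subgroup.map (MulAut.conj w).toMonoidHom (UJ J)
        = Subgroup.map (MulAut.conj v).toMonoidHom (UJ J')) :
    J = J' ∧ w • (UJ J : Set U3) = v • (UJ J' : Set U3) := by
  have hJJ' : J = J' :=
    Set.Subset.antisymm (U3Aux.subset_of_conj_eq h) (U3Aux.subset_of_conj_eq h.symm)
  subst hJJ'
  refine ⟨rfl, ?_⟩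
  set u : U3 := v⁻¹ * w with hu_def
  have hu : ∀ j ∈ J, u * s j * u⁻¹ ∈ UJ J := by
    intro j hj
    have hsj : s j ∈ UJ J := Subgroup.subset_closure ⟨j, hj, rfl⟩
    have h1 : w * s j * w⁻¹ ∈ Subgroup.map (MulAut.conj v).toMonoidHom (UJ J) := by
      rw [← h]
      exact ⟨s j, hsj, by simp [MulAut.conj_apply]⟩
    obtain ⟨y, hy, hy2⟩ := h1
    simp only [MulEquiv.coe_toMonoidHom, MulAut.conj_apply] at hy2
    have h2 : u * s j * u⁻¹ = v⁻¹ * (w * s j * w⁻¹) * v := by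
      rw [hu_def]; group
    have h3 : u * s j * u⁻¹ = y := by
      rw [h2, ← hy2]; group
    rwa [h3]
  have huU : u ∈ UJ J := U3Aux.mem_of_conj J hJne u hu
  have hw : w = v * u := by rw [hu_def]; group
  rw [hw, mul_smul]
  congr 1
  ext x
  rw [Set.mem_smul_set_iff_inv_smul_mem, smul_eq_mul, SetLike.mem_coe, SetLike.mem_coe,
    mul_mem_cancel_left (inv_mem huU)]
end

section
/- Every rank-2 linear subsystem of Φ is infinite. -/
open scoped NNReal

noncomputable section

lemma B_expand (x y : V) :
    B x y = 2 * (x 0 * y 0 + x 1 * y 1 + x 2 * y 2) - (x 0 + x 1 + x 2) * (y 0 + y 1 + y 2) := by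
  simp [B, Fin.sum_univ_three]
lemma B_comm (x y : V) : B x y = B y x := by simp [B_expand]; ring
lemma B_sub_left (x y z : V) : B (x - y) z = B x z - B y z := by simp [B_expand]; ring
lemma B_sub_right (x y z : V) : B x (y - z) = B x y - B x z := by simp [B_expand]; ring
lemma B_add_left (x y z : V) : B (x + y) z = B x z + B y z := by simp [B_expand]; ring
lemma B_add_right (x y z : V) : B x (y + z) = B x y + B x z := by simp [B_expand]; ring
lemma B_smul_left (t : ℝ) (x z : V) : B (t • x) z = t * B x z := by simp [B_expand]; ring
lemma B_smul_right (t : ℝ) (x z : V) : B x (t • z) = t * B x z := by simp [B_expand]; ring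
lemma B_alpha_self (i : Fin 3) : B (α i) (α i) = 1 := by
  fin_cases i <;> simp [B_expand, α, Pi.single] <;> norm_num

/-- reflection in a root `v` (as a plain function). -/
def rfl' (v : V) (x : V) : V := x - (2 * B v x) • v

lemma rfl'_rfl' (v : V) (hv : B v v = 1) (x : V) : rfl' v (rfl' v x) = x := by
  simp only [rfl', B_sub_right, B_smul_right, hv]
  module

/-- simple reflection as a linear map -/
def smap (v : V) : V →ₗ[ℝ] V where
  toFun := rfl' v
  map_add' x y := by simp only [rfl', B_add_right]; module
  map_smul' t x := by simp only [rfl', B_smul_right, RingHom.id_apply]; module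

def sref (v : V) (hv : B v v = 1) : V ≃ₗ[ℝ] V :=
  LinearEquiv.ofLinear (smap v) (smap v)
    (LinearMap.ext fun x => rfl'_rfl' v hv x) (LinearMap.ext fun x => rfl'_rfl' v hv x)

lemma sref_apply (v : V) (hv : B v v = 1) (x : V) : sref v hv x = x - (2 * B v x) • v := rfl

lemma sref_mem_W (i : Fin 3) : sref (α i) (B_alpha_self i) ∈ W :=
  Subgroup.subset_closure ⟨i, fun x => rfl⟩

lemma rfl'_preserves_B (v : V) (hv : B v v = 1) (x y : V) :
    B (rfl' v x) (rfl' v y) = B x y := by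
  simp only [rfl', B_sub_left, B_sub_right, B_smul_left, B_smul_right, hv]
  linear_combination (2 * B v y) * B_comm v x

lemma W_preserves_B {w : V ≃ₗ[ℝ] V} (hw : w ∈ W) : ∀ x y : V, B (w x) (w y) = B x y := by
  induction hw using Subgroup.closure_induction with
  | mem f hf =>
    intro x y
    obtain ⟨i, hi⟩ := hf
    rw [hi x, hi y]
    exact rfl'_preserves_B (α i) (B_alpha_self i) x y
  | one => intro x y; simp
  | mul f g _ _ hf hg =>
    intro x y
    show B (f (g x)) (f (g y)) = B x y
    rw [hf, hg]
  | inv f _ hf =>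
    intro x y
    have h := hf (f⁻¹ x) (f⁻¹ y)
    have e : ∀ z : V, f (f⁻¹ z) = z := fun z => f.apply_symm_apply z
    rw [e, e] at h
    exact h.symm

lemma Q_root {x : V} (hx : x ∈ Φ) : Q x = 1 := by
  obtain ⟨w, hw, i, rfl⟩ := hx
  rw [Q, W_preserves_B hw]
  exact B_alpha_self i

/-- integer coordinates with odd sum -/
def IntOdd (x : V) : Prop := ∃ y : Fin 3 → ℤ, (∀ i, x i = (y i : ℝ)) ∧ Odd (y 0 + y 1 + y 2)

lemma B_int {x z : V} (hx : IntOdd x) (hz : IntOdd z) : ∃ m : ℤ, B x z = (m : ℝ) ∧ Odd m := by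
  obtain ⟨y, hy, hyo⟩ := hx
  obtain ⟨u, hu, huo⟩ := hz
  refine ⟨2 * (y 0 * u 0 + y 1 * u 1 + y 2 * u 2) - (y 0 + y 1 + y 2) * (u 0 + u 1 + u 2), ?_, ?_⟩
  · rw [B_expand, hy 0, hy 1, hy 2, hu 0, hu 1, hu 2]; push_cast; ring
  · rcases hyo with ⟨k, hk⟩
    rcases huo with ⟨l, hl⟩
    exact ⟨(y 0 * u 0 + y 1 * u 1 + y 2 * u 2) - (2*k*l + k + l) - 1, by rw [hk, hl]; ring⟩

lemma IntOdd_alpha (i : Fin 3) : IntOdd (α i) := by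
  fin_cases i
  · exact ⟨![1,0,0], by intro i; fin_cases i <;> simp [α, Pi.single], by decide⟩
  · exact ⟨![0,1,0], by intro i; fin_cases i <;> simp [α, Pi.single], by decide⟩
  · exact ⟨![0,0,1], by intro i; fin_cases i <;> simp [α, Pi.single], by decide⟩

lemma IntOdd_rfl' {v x : V} (hv : IntOdd v) (hx : IntOdd x) : IntOdd (rfl' v x) := by
  obtain ⟨m, hm, hmo⟩ := B_int hv hx
  obtain ⟨y, hy, hyo⟩ := hv
  obtain ⟨u, hu, huo⟩ := hx
  refine ⟨fun i => u i - 2 * m * y i, fun i => ?_, ?_⟩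
  · simp only [rfl', Pi.sub_apply, Pi.smul_apply, smul_eq_mul, hm, hu i, hy i]
    push_cast; ring
  · rcases hyo with ⟨k, hk⟩
    rcases huo with ⟨l, hl⟩
    exact ⟨l - m*(2*k+1), by linear_combination hl - 2*m*hk⟩

lemma gen_involutive {f : V ≃ₗ[ℝ] V} (hf : IsSimpleReflection f) (x : V) : f⁻¹ x = f x := by
  obtain ⟨i, hi⟩ := hf
  apply f.injective
  show f (f.symm x) = _
  rw [f.apply_symm_apply, hi (f x), hi x]
  exact (rfl'_rfl' (α i) (B_alpha_self i) x).symm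

lemma root_IntOdd {x : V} (hx : x ∈ Φ) : IntOdd x := by
  obtain ⟨w, hw, i, rfl⟩ := hx
  have key : (∀ v : V, IntOdd v → IntOdd (w v)) ∧ (∀ v : V, IntOdd v → IntOdd (w⁻¹ v)) := by
    induction hw using Subgroup.closure_induction with
    | mem f hf =>
      obtain ⟨j, hj⟩ := hf
      constructor
      · intro v hv
        rw [hj v]
        exact IntOdd_rfl' (IntOdd_alpha j) hv
      · intro v hv
        rw [gen_involutive ⟨j, hj⟩ v, hj v]
        exact IntOdd_rfl' (IntOdd_alpha j) hv
    | one => exact ⟨fun v hv => hv, fun v hv => by simpa using hv⟩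
    | mul f g _ _ hf hg =>
      refine ⟨fun v hv => hf.1 _ (hg.1 _ hv), fun v hv => ?_⟩
      have : (f * g)⁻¹ v = g⁻¹ (f⁻¹ v) := by rw [mul_inv_rev]; rfl
      rw [this]
      exact hg.2 _ (hf.2 _ hv)
    | inv f _ hf =>
      refine ⟨hf.2, fun v hv => ?_⟩
      have : f⁻¹⁻¹ v = f v := by rw [inv_inv]
      rw [this]
      exact hf.1 _ hv
  exact key.1 _ (IntOdd_alpha i)

lemma rfl'_root_mem {a x : V} (ha : a ∈ Φ) (hx : x ∈ Φ) : x - (2 * B a x) • a ∈ Φ := by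
  obtain ⟨w, hw, i, rfl⟩ := ha
  obtain ⟨u, hu, j, rfl⟩ := hx
  refine ⟨w * sref (α i) (B_alpha_self i) * w⁻¹ * u, ?_, j, ?_⟩
  · exact mul_mem (mul_mem (mul_mem hw (sref_mem_W i)) (inv_mem hw)) hu
  · show u (α j) - _ = w (sref (α i) (B_alpha_self i) (w⁻¹ (u (α j))))
    rw [sref_apply]
    have e1 : B (α i) (w⁻¹ (u (α j))) = B (w (α i)) (u (α j)) := by
      have h := W_preserves_B hw (α i) (w⁻¹ (u (α j)))
      rw [show w (w⁻¹ (u (α j))) = u (α j) from w.apply_symm_apply _] at h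
      exact h.symm
    rw [map_sub, map_smul, show w (w⁻¹ (u (α j))) = u (α j) from w.apply_symm_apply _, e1]
  
lemma neg_root_mem {x : V} (hx : x ∈ Φ) : -x ∈ Φ := by
  have h := rfl'_root_mem hx hx
  have hq : B x x = 1 := Q_root hx
  rw [hq] at h
  have : x - (2 * (1:ℝ)) • x = -x := by module
  rwa [this] at h

/-- auxiliary coefficient sequence -/
def cseq (c q0 q1 : ℝ) : ℕ → ℝ
  | 0 => q0
  | 1 => q1
  | n+2 => 2 * c * cseq c q0 q1 (n+1) - cseq c q0 q1 n

/-- the root string sequence -/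
def rootSeq (a b : V) (c : ℝ) : ℕ → V
  | 0 => a
  | 1 => b
  | n+2 => (2*c) • rootSeq a b c (n+1) - rootSeq a b c n

lemma two_step {P : ℕ → Prop} (h0 : P 0) (h1 : P 1)
    (h : ∀ n, P n → P (n+1) → P (n+2)) : ∀ n, P n := by
  have key : ∀ n, P n ∧ P (n+1) := by
    intro n
    induction n with
    | zero => exact ⟨h0, h1⟩
    | succ k ih => exact ⟨ih.2, h k ih.1 ih.2⟩
  exact fun n => (key n).1

lemma rootSeq_mem {a b : V} (ha : a ∈ Φ) (hb : b ∈ Φ) :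
    ∀ n, rootSeq a b (B a b) n ∈ Φ := by
  set c := B a b with hc
  set x := rootSeq a b c with hx
  have key : ∀ n, x n ∈ Φ ∧ x (n+1) ∈ Φ ∧ B (x n) (x (n+1)) = c := by
    intro n
    induction n with
    | zero => exact ⟨ha, hb, rfl⟩
    | succ k ih =>
      obtain ⟨h1, h2, h3⟩ := ih
      have hx2 : x (k+2) = (2*c) • x (k+1) - x k := rfl
      have hmem : x (k+2) ∈ Φ := by
        have hr := neg_root_mem (rfl'_root_mem h2 h1)
        have : -(x k - (2 * B (x (k+1)) (x k)) • x (k+1)) = x (k+2) := by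
          rw [B_comm, h3, hx2]; module
        rwa [this] at hr
      refine ⟨h2, hmem, ?_⟩
      rw [hx2, B_sub_right, B_smul_right]
      have hq : B (x (k+1)) (x (k+1)) = 1 := Q_root h2
      rw [hq, B_comm, h3]
      ring
  exact fun n => (key n).1

lemma rootSeq_coeff (a b : V) (c : ℝ) :
    ∀ n, rootSeq a b c n = cseq c 1 0 n • a + cseq c 0 1 n • b := by
  refine two_step ?_ ?_ ?_
  · show a = (1:ℝ) • a + (0:ℝ) • b; module
  · show b = (0:ℝ) • a + (1:ℝ) • b; module
  · intro n hn hn1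
    show (2*c) • rootSeq a b c (n+1) - rootSeq a b c n = _
    rw [hn, hn1]
    show _ = (2 * c * cseq c 1 0 (n+1) - cseq c 1 0 n) • a +
      (2 * c * cseq c 0 1 (n+1) - cseq c 0 1 n) • b
    module

lemma cseq_mono {c : ℝ} (hc : 1 ≤ c) :
    ∀ n, 0 ≤ cseq c 0 1 n ∧ cseq c 0 1 n + 1 ≤ cseq c 0 1 (n+1) := by
  intro n
  induction n with
  | zero =>
    constructor
    · exact le_refl (0:ℝ)
    · show (0:ℝ) + 1 ≤ 1; norm_num
  | succ k ih =>
    obtain ⟨h1, h2⟩ := ih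
    have e : cseq c 0 1 (k+2) = 2 * c * cseq c 0 1 (k+1) - cseq c 0 1 k := rfl
    constructor
    · nlinarith
    · rw [e]; nlinarith

lemma cseq_injective {c : ℝ} (hc : 1 ≤ c) : Function.Injective (cseq c 0 1) := by
  have : StrictMono (cseq c 0 1) := by
    apply strictMono_nat_of_lt_succ
    intro n
    have := (cseq_mono hc n).2
    linarith
  exact this.injective

lemma Q_zero : Q (0 : V) = 0 := by simp [Q, B_expand]

lemma root_abs_B_ge_one {a b : V} (ha : a ∈ Φ) (hb : b ∈ Φ) : 1 ≤ B a b ∨ B a b ≤ -1 := by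
  obtain ⟨m, hm, hmo⟩ := B_int (root_IntOdd ha) (root_IntOdd hb)
  rcases hmo with ⟨k, hk⟩
  rw [hm, hk]
  rcases le_or_gt 0 k with h | h
  · left; push_cast; linarith [(by exact_mod_cast h : (0:ℝ) ≤ (k:ℝ))]
  · right
    have : k ≤ -1 := by omega
    push_cast
    have : (k:ℝ) ≤ -1 := by exact_mod_cast this
    linarith


/-- Every rank-2 linear subsystem of `Φ` is infinite. -/
theorem rank2_linear_subsystem_infinite (H : Submodule ℝ V)
    (h2 : Module.finrank ℝ H = 2)
    (hspan : H = Submodule.span ℝ ((H : Set V) ∩ Φ)) :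
    ((H : Set V) ∩ Φ).Infinite := by
  set S : Set V := (H : Set V) ∩ Φ with hS
  -- S is nonempty
  have hne : S.Nonempty := by
    by_contra h
    rw [Set.not_nonempty_iff_eq_empty] at h
    rw [h, Submodule.span_empty] at hspan
    rw [hspan] at h2
    rw [finrank_bot ℝ V] at h2
    omega
  obtain ⟨a, haH, haΦ⟩ := hne
  have ha0 : a ≠ 0 := by
    intro h
    have := Q_root haΦ
    rw [h, Q_zero] at this
    norm_num at this
  -- there is b ∈ S not in span{a}
  have hb : ∃ b ∈ S, b ∉ Submodule.span ℝ {a} := by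
    by_contra h
    push_neg at h
    have hle : H ≤ Submodule.span ℝ {a} := by
      rw [hspan]
      exact Submodule.span_le.mpr h
    have := Submodule.finrank_mono hle
    rw [h2, finrank_span_singleton ha0] at this
    omega
  obtain ⟨b, ⟨hbH, hbΦ⟩, hbspan⟩ := hb
  -- arrange 1 ≤ B a b by possibly replacing b with -b
  have hmain : ∃ b', b' ∈ S ∧ b' ∉ Submodule.span ℝ {a} ∧ 1 ≤ B a b' := by
    rcases root_abs_B_ge_one haΦ hbΦ with h | h
    · exact ⟨b, ⟨hbH, hbΦ⟩, hbspan, h⟩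
    · refine ⟨-b, ⟨H.neg_mem hbH, neg_root_mem hbΦ⟩, ?_, ?_⟩
      · intro hmem
        exact hbspan (by simpa using Submodule.neg_mem _ hmem)
      · have : B a (-b) = -B a b := by
          have : -b = (-1 : ℝ) • b := by module
          rw [this, B_smul_right]; ring
        rw [this]; linarith
  obtain ⟨b', ⟨hb'H, hb'Φ⟩, hb'span, hc1⟩ := hmain
  set c := B a b' with hc
  set x := rootSeq a b' c with hx
  -- all terms are in S
  have hxS : ∀ n, x n ∈ S := by
    intro n
    constructor
    · rw [hx, rootSeq_coeff a b' c n]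
      exact H.add_mem (H.smul_mem _ haH) (H.smul_mem _ hb'H)
    · exact rootSeq_mem haΦ hb'Φ n
  -- x is injective
  have hxinj : Function.Injective x := by
    intro m n hmn
    apply cseq_injective hc1
    by_contra hq
    have hcoeff : cseq c 1 0 m • a + cseq c 0 1 m • b' = cseq c 1 0 n • a + cseq c 0 1 n • b' := by
      rw [← rootSeq_coeff, ← rootSeq_coeff]; exact hmn
    apply absurd ?_ hb'span
    rw [Submodule.mem_span_singleton]
    have hne : cseq c 0 1 m - cseq c 0 1 n ≠ 0 := fun h => hq (by linarith [sub_eq_zero.mp h])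
    refine ⟨(cseq c 0 1 m - cseq c 0 1 n)⁻¹ * (cseq c 1 0 n - cseq c 1 0 m), ?_⟩
    have h1 : (cseq c 0 1 m - cseq c 0 1 n) • b' = (cseq c 1 0 n - cseq c 1 0 m) • a := by
      linear_combination (norm := module) hcoeff
    rw [mul_smul, ← h1, inv_smul_smul₀ hne]
  exact Set.infinite_of_injective_forall_mem hxinj hxS
end
end

section
/- For any two distinct positive roots α, β ∈ Φ⁺, there exists a nonzero vector v in the linear span of {α, β} with Q(v) ≤ 0. -/
open scoped NNReal

noncomputable section

-- auxiliary
def IntVec (x : V) : Prop := ∀ i, ∃ n : ℤ, x i = n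

lemma B_sub_smul_left (x y u : V) (s : ℝ) :
    B (x - s • u) y = B x y - s * B u y := by
  simp [B, Fin.sum_univ_three, Pi.sub_apply, Pi.smul_apply, smul_eq_mul]; ring

lemma B_sub_smul_right (x y u : V) (s : ℝ) :
    B x (y - s • u) = B x y - s * B x u := by
  simp [B, Fin.sum_univ_three, Pi.sub_apply, Pi.smul_apply, smul_eq_mul]; ring

lemma intvec_alpha (i : Fin 3) : IntVec (α i) := by
  intro j
  by_cases h : j = i
  · exact ⟨1, by subst h; simp [α]⟩
  · exact ⟨0, by simp [α, Pi.single_apply, h]⟩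

lemma B_int_s8 {x y : V} (hx : IntVec x) (hy : IntVec y) : ∃ k : ℤ, B x y = k := by
  obtain ⟨m0, hm0⟩ := hx 0; obtain ⟨m1, hm1⟩ := hx 1; obtain ⟨m2, hm2⟩ := hx 2
  obtain ⟨n0, hn0⟩ := hy 0; obtain ⟨n1, hn1⟩ := hy 1; obtain ⟨n2, hn2⟩ := hy 2
  refine ⟨2*(m0*n0+m1*n1+m2*n2) - (m0+m1+m2)*(n0+n1+n2), ?_⟩
  simp only [B, Fin.sum_univ_three, hm0, hm1, hm2, hn0, hn1, hn2]; push_cast; ring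

def Good (w : V ≃ₗ[ℝ] V) : Prop :=
  (∀ x y, B (w x) (w y) = B x y) ∧ (∀ x, IntVec x → IntVec (w x))
    ∧ (∀ x, IntVec x → IntVec (w.symm x))

lemma good_refl {f : V ≃ₗ[ℝ] V} (hf : IsSimpleReflection f) : Good f := by
  obtain ⟨i, hi⟩ := hf
  have hB : ∀ x y, B (f x) (f y) = B x y := by
    intro x y
    rw [hi x, hi y, B_sub_smul_left, B_sub_smul_right, B_sub_smul_right,
      B_alpha_self, B_comm (α i) x]
    ring
  have hinv : ∀ x, f x = f.symm x := by
    intro x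
    have h2 : f (f x) = x := by
      rw [hi (f x), hi x, B_sub_smul_right, B_alpha_self]
      have h3 : (2*(B (α i) x - 2*B (α i) x * 1)) = -(2*B (α i) x) := by ring
      rw [h3]
      module
    calc f x = f.symm (f (f x)) := by rw [f.symm_apply_apply]
    _ = f.symm x := by rw [h2]
  have hI : ∀ x, IntVec x → IntVec (f x) := by
    intro x hx j
    obtain ⟨k, hk⟩ := B_int_s8 (intvec_alpha i) hx
    obtain ⟨aj, haj⟩ := intvec_alpha i j
    obtain ⟨xj, hxj⟩ := hx j
    refine ⟨xj - 2*k*aj, ?_⟩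
    rw [hi x]
    simp only [Pi.sub_apply, Pi.smul_apply, smul_eq_mul, hk, haj, hxj]
    push_cast; ring
  exact ⟨hB, hI, fun x hx => (hinv x) ▸ hI x hx⟩

lemma good_of_mem {w : V ≃ₗ[ℝ] V} (hw : w ∈ W) : Good w := by
  induction hw using Subgroup.closure_induction with
  | mem f hf => exact good_refl hf
  | one => exact ⟨fun x y => rfl, fun x hx => hx, fun x hx => hx⟩
  | mul u v hu hv ihu ihv =>
      refine ⟨fun x y => ?_, fun x hx => ?_, fun x hx => ?_⟩
      · show B (u (v x)) (u (v y)) = B x y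
        rw [ihu.1, ihv.1]
      · exact ihu.2.1 _ (ihv.2.1 x hx)
      · show IntVec (v.symm (u.symm x))
        exact ihv.2.2 _ (ihu.2.2 x hx)
  | inv u hu ihu =>
      refine ⟨fun x y => ?_, fun x hx => ihu.2.2 x hx, fun x hx => ihu.2.1 x hx⟩
      show B (u.symm x) (u.symm y) = B x y
      conv_rhs => rw [← u.apply_symm_apply x, ← u.apply_symm_apply y, ihu.1]

lemma root_props {x : V} (hx : x ∈ Φ) : Q x = 1 ∧ IntVec x := by
  obtain ⟨w, hw, i, rfl⟩ := hx
  have hg := good_of_mem hw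
  constructor
  · show B _ _ = 1
    rw [hg.1, B_alpha_self]
  · exact hg.2.1 _ (intvec_alpha i)

lemma nonneg_of_nnspan {x : V} (hx : x ∈ nnspan Δ) : ∀ i, 0 ≤ x i := by
  have : ∀ y ∈ Submodule.span ℝ≥0 Δ, ∀ i, (0:ℝ) ≤ y i := by
    intro y hy
    induction hy using Submodule.span_induction with
    | mem z hz =>
        obtain ⟨j, rfl⟩ := hz
        intro i
        by_cases h : i = j <;> simp [α, Pi.single_apply, h]
    | zero => intro i; simp
    | add u v _ _ ihu ihv => intro i; exact add_nonneg (ihu i) (ihv i)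
    | smul c u _ ihu =>
        intro i
        have : (c • u) i = (c:ℝ) * u i := rfl
        rw [this]
        exact mul_nonneg c.2 (ihu i)
  exact this x hx

lemma Q_expand (r : ℝ) (x y : V) :
    Q (r • x - y) = r^2 * Q x - 2*r*(B x y) + Q y := by
  simp [Q, B, Fin.sum_univ_three, Pi.sub_apply, Pi.smul_apply, smul_eq_mul]; ring

/-- For any two distinct positive roots `a, b`, there is a nonzero vector in their
linear span with nonpositive norm. -/
theorem span_of_two_roots_meets_cone (a b : V) (ha : a ∈ Φpos) (hb : b ∈ Φpos)
    (hab : a ≠ b) :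
    ∃ v ∈ Submodule.span ℝ ({a, b} : Set V), v ≠ 0 ∧ Q v ≤ 0 := by
  obtain ⟨haΦ, haC⟩ := ha
  obtain ⟨hbΦ, hbC⟩ := hb
  obtain ⟨hQa, hIa⟩ := root_props haΦ
  obtain ⟨hQb, hIb⟩ := root_props hbΦ
  -- integer coordinates
  obtain ⟨m0, hm0⟩ := hIa 0; obtain ⟨m1, hm1⟩ := hIa 1; obtain ⟨m2, hm2⟩ := hIa 2
  obtain ⟨n0, hn0⟩ := hIb 0; obtain ⟨n1, hn1⟩ := hIb 1; obtain ⟨n2, hn2⟩ := hIb 2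
  -- integer versions of Q a, Q b, B a b
  have hQaZ : (2*(m0*m0+m1*m1+m2*m2) - (m0+m1+m2)*(m0+m1+m2) : ℤ) = 1 := by
    have : ((2*(m0*m0+m1*m1+m2*m2) - (m0+m1+m2)*(m0+m1+m2) : ℤ) : ℝ) = Q a := by
      simp only [Q, B, Fin.sum_univ_three, hm0, hm1, hm2]; push_cast; ring
    exact_mod_cast this.trans hQa
  have hQbZ : (2*(n0*n0+n1*n1+n2*n2) - (n0+n1+n2)*(n0+n1+n2) : ℤ) = 1 := by
    have : ((2*(n0*n0+n1*n1+n2*n2) - (n0+n1+n2)*(n0+n1+n2) : ℤ) : ℝ) = Q b := by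
      simp only [Q, B, Fin.sum_univ_three, hn0, hn1, hn2]; push_cast; ring
    exact_mod_cast this.trans hQb
  set k : ℤ := 2*(m0*n0+m1*n1+m2*n2) - (m0+m1+m2)*(n0+n1+n2) with hk
  have hBab : B a b = (k:ℝ) := by
    simp only [B, Fin.sum_univ_three, hm0, hm1, hm2, hn0, hn1, hn2, hk]; push_cast; ring
  -- parity: k is odd
  have hodd : Odd k := by
    have h1 : Odd ((m0+m1+m2) * (m0+m1+m2)) := by
      refine ⟨(m0*m0+m1*m1+m2*m2) - 1, by linarith [hQaZ]⟩
    have h2 : Odd ((n0+n1+n2) * (n0+n1+n2)) := by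
      refine ⟨(n0*n0+n1*n1+n2*n2) - 1, by linarith [hQbZ]⟩
    have hm : Odd (m0+m1+m2) := (Int.odd_mul.mp h1).1
    have hn : Odd (n0+n1+n2) := (Int.odd_mul.mp h2).1
    obtain ⟨p, hp⟩ := hm; obtain ⟨q, hq⟩ := hn
    exact ⟨(m0*n0+m1*n1+m2*n2) - (2*p*q + p + q + 1), by rw [hk, hp, hq]; ring⟩
  have hk1 : (1:ℤ) ≤ k^2 := by
    have hne : k ≠ 0 := by rcases hodd with ⟨t, ht⟩; omega
    have h1 := Int.one_le_abs hne
    nlinarith [sq_abs k, abs_nonneg k]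
  have hc2 : (1:ℝ) ≤ (B a b)^2 := by
    rw [hBab]; exact_mod_cast hk1
  set c : ℝ := B a b with hc
  refine ⟨c • a - b, ?_, ?_, ?_⟩
  · exact Submodule.sub_mem _
      (Submodule.smul_mem _ _ (Submodule.subset_span (Set.mem_insert a _)))
      (Submodule.subset_span (Set.mem_insert_of_mem _ rfl))
  · intro h0
    have hba : b = c • a := (sub_eq_zero.mp h0).symm
    have hQsm : Q (c • a) = c^2 * Q a := by
      simp only [Q, B, Fin.sum_univ_three, Pi.smul_apply, smul_eq_mul]; ring
    have hc21 : c^2 = 1 := by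
      have := hQsm
      rw [← hba, hQb, hQa] at this
      linarith
    have hfac : (c - 1) * (c + 1) = 0 := by nlinarith
    rcases mul_eq_zero.mp hfac with h | h
    · have : c = 1 := by linarith
      rw [this, one_smul] at hba
      exact hab hba.symm
    · have hcneg : c = -1 := by linarith
      rw [hcneg] at hba
      have hzero : ∀ i, a i = 0 := by
        intro i
        have h1 : 0 ≤ a i := nonneg_of_nnspan haC i
        have h2 : 0 ≤ b i := nonneg_of_nnspan hbC i
        have h3 : b i = -(a i) := by rw [hba]; simp
        linarith [h3 ▸ h2]
      have ha0 : a = 0 := funext hzero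
      rw [ha0] at hQa
      simp [Q, B] at hQa
  · have := Q_expand c a b
    rw [hQa, hQb, ← hc] at this
    nlinarith [hc2]
end
end

section
/- Let Φ' be a rank-2 linear subsystem of Φ and let β, γ ∈ Φ'⁺. If β is relatively simple in Φ' and γ is not relatively simple in Φ', then height(β) < height(γ). -/
open scoped NNReal

noncomputable section

namespace Aux

def hsum (x : V) : ℝ := x 0 + x 1 + x 2

lemma B_expand (x y : V) : B x y =
    2*(x 0*y 0 + x 1*y 1 + x 2*y 2) - (x 0 + x 1 + x 2)*(y 0 + y 1 + y 2) := by
  simp [B, Fin.sum_univ_three]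

lemma B_symm (x y : V) : B x y = B y x := by simp [B_expand]; ring

lemma hsum_eq (x : V) : (∑ i, x i) = hsum x := by simp [hsum, Fin.sum_univ_three]

lemma B_alpha (i : Fin 3) (x : V) : B (α i) x = 2 * x i - hsum x := by
  fin_cases i <;> (norm_num [B_expand, α, Pi.single_apply, hsum, Fin.ext_iff]; try ring) <;> rfl

lemma B_alpha_alpha (i : Fin 3) : B (α i) (α i) = 1 := by
  fin_cases i <;> norm_num [B_expand, α, Pi.single_apply, Fin.ext_iff]

lemma B_add_right (x u v : V) : B x (u + v) = B x u + B x v := by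
  simp [B_expand, Pi.add_apply]; ring

lemma B_smul_right (x u : V) (c : ℝ) : B x (c • u) = c * B x u := by
  simp [B_expand, Pi.smul_apply, smul_eq_mul]; ring

lemma B_comb_right (x u v : V) (a b : ℝ) : B x (a • u + b • v) = a * B x u + b * B x v := by
  simp [B_expand, Pi.add_apply, Pi.smul_apply, smul_eq_mul]; ring

lemma B_comb_left (x u v : V) (a b : ℝ) : B (a • u + b • v) x = a * B u x + b * B v x := by
  simp [B_expand, Pi.add_apply, Pi.smul_apply, smul_eq_mul]; ring

lemma Q_comb (u v : V) (a b : ℝ) :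
    Q (a • u + b • v) = a^2 * Q u + b^2 * Q v + 2*a*b * B u v := by
  simp [Q, B_expand, Pi.add_apply, Pi.smul_apply, smul_eq_mul]; ring

lemma Q_smul (u : V) (c : ℝ) : Q (c • u) = c^2 * Q u := by
  simp [Q, B_expand, Pi.smul_apply, smul_eq_mul]; ring

lemma hsum_comb (u v : V) (a b : ℝ) : hsum (a • u + b • v) = a * hsum u + b * hsum v := by
  simp [hsum, Pi.add_apply, Pi.smul_apply, smul_eq_mul]; ring

lemma hsum_sub_smul (u v : V) (c : ℝ) : hsum (u - c • v) = hsum u - c * hsum v := by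
  simp [hsum, Pi.sub_apply, Pi.smul_apply, smul_eq_mul]; ring

lemma Q_zero : Q (0 : V) = 0 := by norm_num [Q, B_expand]

lemma B_sub_smul_sub_smul (a x y : V) (c d : ℝ) :
    B (x - c • a) (y - d • a) = B x y - c * B a y - d * B x a + c * d * B a a := by
  simp [B_expand, Pi.sub_apply, Pi.smul_apply, smul_eq_mul]; ring

lemma B_reflect (a x y : V) (ha : B a a = 1) :
    B (x - (2 * B a x) • a) (y - (2 * B a y) • a) = B x y := by
  rw [B_sub_smul_sub_smul, ha, B_symm x a, B_symm a y]; ring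

end Aux

namespace Aux

/-- Integer vectors. -/
def IntVec (x : V) : Prop := ∃ a b c : ℤ, x 0 = a ∧ x 1 = b ∧ x 2 = c

lemma w_preserves_B {w : V ≃ₗ[ℝ] V} (hw : w ∈ W) : ∀ x y : V, B (w x) (w y) = B x y := by
  refine Subgroup.closure_induction (p := fun g _ => ∀ x y : V, B (g x) (g y) = B x y)
    ?_ ?_ ?_ ?_ hw
  · rintro f ⟨i, hf⟩ x y
    rw [hf x, hf y]; exact B_reflect (α i) x y (B_alpha_alpha i)
  · intro x y; rfl
  · intro f g _ _ hf hg x y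
    have : (f * g) x = f (g x) := rfl
    rw [this, show (f * g) y = f (g y) from rfl, hf, hg]
  · intro f _ hf x y
    have h := hf (f.symm x) (f.symm y)
    rw [f.apply_symm_apply, f.apply_symm_apply] at h
    exact h.symm

lemma simple_refl_involutive {f : V ≃ₗ[ℝ] V} (hf : IsSimpleReflection f) :
    ∀ x, f (f x) = x := by
  obtain ⟨i, hf⟩ := hf
  intro x
  rw [hf x, hf _]
  have h1 : B (α i) (x - (2 * B (α i) x) • α i) = - B (α i) x := by
    have : x - (2 * B (α i) x) • α i = (1:ℝ) • x + (-(2 * B (α i) x)) • α i := by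
      simp [sub_eq_add_neg, neg_smul]
    rw [this, B_comb_right, B_alpha_alpha]; ring
  rw [h1]
  have : (2 * - B (α i) x) • α i = - ((2 * B (α i) x) • α i) := by
    rw [← neg_smul]; ring_nf
  rw [this]; abel

lemma x_apply_int {x : V} (hx : IntVec x) (i : Fin 3) : ∃ d : ℤ, x i = d := by
  obtain ⟨a, b, c, ha, hb, hc⟩ := hx
  fin_cases i
  · exact ⟨a, ha⟩
  · exact ⟨b, hb⟩
  · exact ⟨c, hc⟩

lemma hsum_int {x : V} (hx : IntVec x) : ∃ d : ℤ, hsum x = d := by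
  obtain ⟨a, b, c, ha, hb, hc⟩ := hx
  exact ⟨a + b + c, by simp [hsum, ha, hb, hc]⟩

lemma B_alpha_int {x : V} (hx : IntVec x) (i : Fin 3) : ∃ k : ℤ, B (α i) x = k := by
  obtain ⟨d, hd⟩ := x_apply_int hx i
  obtain ⟨e, he⟩ := hsum_int hx
  exact ⟨2*d - e, by rw [B_alpha, hd, he]; push_cast; ring⟩

lemma intvec_sub_smul_alpha {x : V} {t : ℝ} (hx : IntVec x) (ht : ∃ k : ℤ, t = k)
    (i : Fin 3) : IntVec (x - t • α i) := by
  obtain ⟨a, b, c, ha, hb, hc⟩ := hx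
  obtain ⟨k, hk⟩ := ht
  fin_cases i
  · exact ⟨a - k, b, c, by
      refine ⟨?_, ?_, ?_⟩ <;>
        simp [Pi.sub_apply, Pi.smul_apply, α, Pi.single_apply, ha, hb, hc, hk, smul_eq_mul,
          Fin.ext_iff] <;> push_cast <;> ring⟩
  · exact ⟨a, b - k, c, by
      refine ⟨?_, ?_, ?_⟩ <;>
        simp [Pi.sub_apply, Pi.smul_apply, α, Pi.single_apply, ha, hb, hc, hk, smul_eq_mul,
          Fin.ext_iff] <;> push_cast <;> ring⟩
  · exact ⟨a, b, c - k, by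
      refine ⟨?_, ?_, ?_⟩ <;>
        simp [Pi.sub_apply, Pi.smul_apply, α, Pi.single_apply, ha, hb, hc, hk, smul_eq_mul,
          Fin.ext_iff] <;> push_cast <;> ring⟩

lemma w_preserves_int {w : V ≃ₗ[ℝ] V} (hw : w ∈ W) :
    ∀ x : V, IntVec x → IntVec (w x) := by
  have main : (∀ x : V, IntVec x → IntVec (w x)) ∧ (∀ x : V, IntVec x → IntVec (w.symm x)) := by
    refine Subgroup.closure_induction
      (p := fun g _ => (∀ x : V, IntVec x → IntVec (g x)) ∧
        (∀ x : V, IntVec x → IntVec (g.symm x))) ?_ ?_ ?_ ?_ hw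
    · rintro f hf
      have hinv := simple_refl_involutive hf
      obtain ⟨i, hfi⟩ := hf
      have key : ∀ x : V, IntVec x → IntVec (f x) := by
        intro x hx
        rw [hfi x]
        refine intvec_sub_smul_alpha hx ?_ i
        obtain ⟨k, hk⟩ := B_alpha_int hx i
        exact ⟨2*k, by rw [hk]; push_cast; ring⟩
      refine ⟨key, fun x hx => ?_⟩
      have : f.symm x = f.symm (f (f x)) := by rw [hinv x]
      rw [this, f.symm_apply_apply]
      exact key x hx
    · exact ⟨fun x hx => hx, fun x hx => hx⟩
    · intro f g _ _ hf hg
      exact ⟨fun x hx => hf.1 _ (hg.1 x hx), fun x hx => hg.2 _ (hf.2 x hx)⟩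
    · intro f _ hf
      exact ⟨hf.2, fun x hx => hf.1 x hx⟩
  exact main.1

end Aux

namespace Aux

/-- The sign dichotomy for integer vectors with Q = 1. -/
lemma int_sign_lemma (a b c : ℤ) (h : 2*(a^2+b^2+c^2) - (a+b+c)^2 = 1) :
    (0 ≤ a ∧ 0 ≤ b ∧ 0 ≤ c) ∨ (a ≤ 0 ∧ b ≤ 0 ∧ c ≤ 0) := by
  have key : ∀ x y z : ℤ, 2*(x^2+y^2+z^2) - (x+y+z)^2 = 1 → 0 < x → y < 0 → False := by
    intro x y z hq hx hy
    nlinarith [sq_nonneg (x + y - z), mul_pos hx (by linarith : (0:ℤ) < -y)]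
  have k1 : ¬(0 < a ∧ b < 0) := fun ⟨h1, h2⟩ => key a b c (by linear_combination h) h1 h2
  have k2 : ¬(0 < a ∧ c < 0) := fun ⟨h1, h2⟩ => key a c b (by linear_combination h) h1 h2
  have k3 : ¬(0 < b ∧ a < 0) := fun ⟨h1, h2⟩ => key b a c (by linear_combination h) h1 h2
  have k4 : ¬(0 < b ∧ c < 0) := fun ⟨h1, h2⟩ => key b c a (by linear_combination h) h1 h2
  have k5 : ¬(0 < c ∧ a < 0) := fun ⟨h1, h2⟩ => key c a b (by linear_combination h) h1 h2
  have k6 : ¬(0 < c ∧ b < 0) := fun ⟨h1, h2⟩ => key c b a (by linear_combination h) h1 h2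
  omega

lemma alpha_intvec (i : Fin 3) : IntVec (α i) := by
  fin_cases i
  · exact ⟨1, 0, 0, by norm_num [α, Pi.single_apply, Fin.ext_iff]⟩
  · exact ⟨0, 1, 0, by norm_num [α, Pi.single_apply, Fin.ext_iff]⟩
  · exact ⟨0, 0, 1, by norm_num [α, Pi.single_apply, Fin.ext_iff]⟩

lemma root_Q {v : V} (hv : v ∈ Φ) : Q v = 1 := by
  obtain ⟨w, hw, i, rfl⟩ := hv
  show B _ _ = 1
  rw [w_preserves_B hw]
  exact B_alpha_alpha i

lemma root_int {v : V} (hv : v ∈ Φ) : IntVec v := by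
  obtain ⟨w, hw, i, rfl⟩ := hv
  exact w_preserves_int hw _ (alpha_intvec i)

lemma root_sign {v : V} (hv : v ∈ Φ) : (∀ i, 0 ≤ v i) ∨ (∀ i, v i ≤ 0) := by
  obtain ⟨a, b, c, ha, hb, hc⟩ := root_int hv
  have hq : Q v = 1 := root_Q hv
  have hq' : (2*(a^2+b^2+c^2) - (a+b+c)^2 : ℤ) = 1 := by
    have : ((2*(a^2+b^2+c^2) - (a+b+c)^2 : ℤ) : ℝ) = Q v := by
      rw [Q, B_expand, ha, hb, hc]; push_cast; ring
    exact_mod_cast this.trans hq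
  have tri : ∀ i : Fin 3, v i = a ∨ v i = b ∨ v i = c := by
    intro i; fin_cases i
    · exact Or.inl ha
    · exact Or.inr (Or.inl hb)
    · exact Or.inr (Or.inr hc)
  rcases int_sign_lemma a b c hq' with ⟨h1, h2, h3⟩ | ⟨h1, h2, h3⟩
  · left; intro i
    rcases tri i with h | h | h <;> rw [h] <;> exact_mod_cast (by assumption)
  · right; intro i
    rcases tri i with h | h | h <;> rw [h] <;> exact_mod_cast (by assumption)

lemma root_hsum_odd {v : V} (hv : v ∈ Φ) : ∃ n : ℤ, Odd n ∧ hsum v = n := by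
  obtain ⟨a, b, c, ha, hb, hc⟩ := root_int hv
  refine ⟨a + b + c, ?_, by rw [hsum, ha, hb, hc]; push_cast; ring⟩
  have hq : Q v = 1 := root_Q hv
  have hq' : (2*(a^2+b^2+c^2) - (a+b+c)^2 : ℤ) = 1 := by
    have : ((2*(a^2+b^2+c^2) - (a+b+c)^2 : ℤ) : ℝ) = Q v := by
      rw [Q, B_expand, ha, hb, hc]; push_cast; ring
    exact_mod_cast this.trans hq
  rcases Int.even_or_odd (a + b + c) with he | ho
  · exfalso
    obtain ⟨m, hm⟩ := he
    have h4 : 2*(a^2+b^2+c^2) - 4*(m*m) = 1 := by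
      rw [show 4*(m*m) = (m+m)^2 by ring, ← hm]; exact hq'
    have := sq_nonneg (a+b+c)
    omega
  · exact ho

lemma B_roots_odd {u v : V} (hu : u ∈ Φ) (hv : v ∈ Φ) : ∃ n : ℤ, Odd n ∧ B u v = n := by
  obtain ⟨a, b, c, ha, hb, hc⟩ := root_int hu
  obtain ⟨d, e, f, hd, he, hf⟩ := root_int hv
  obtain ⟨m, hm, hms⟩ := root_hsum_odd hu
  obtain ⟨n, hn, hns⟩ := root_hsum_odd hv
  refine ⟨2*(a*d + b*e + c*f) - m*n, ?_, ?_⟩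
  · rcases hm with ⟨i, hi⟩; rcases hn with ⟨j, hj⟩
    exact ⟨(a*d + b*e + c*f) - (2*i*j + i + j + 1), by rw [hi, hj]; ring⟩
  · rw [B_expand, ha, hb, hc, hd, he, hf]
    have h1 : (a:ℝ) + b + c = m := by
      rw [← hms, hsum, ha, hb, hc]
    have h2 : (d:ℝ) + e + f = n := by
      rw [← hns, hsum, hd, he, hf]
    push_cast [← h1, ← h2]
    ring

end Aux

namespace Aux

/-- The simple reflection as a linear equivalence. -/
def reflMap (i : Fin 3) : V →ₗ[ℝ] V where
  toFun x := x - (2 * B (α i) x) • α i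
  map_add' x y := by
    rw [B_add_right]; module
  map_smul' c x := by
    simp only [RingHom.id_apply]
    rw [B_smul_right]; module

lemma refl_formula_invol (i : Fin 3) (x : V) :
    (x - (2 * B (α i) x) • α i) - (2 * B (α i) (x - (2 * B (α i) x) • α i)) • α i = x := by
  have h1 : B (α i) (x - (2 * B (α i) x) • α i) = - B (α i) x := by
    rw [show x - (2 * B (α i) x) • α i = (1:ℝ)•x + (-(2 * B (α i) x)) • α i by module,
      B_comb_right, B_alpha_alpha]
    ring
  rw [h1]; module

lemma reflMap_invol (i : Fin 3) : Function.Involutive (reflMap i) := by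
  intro x
  show (x - (2 * B (α i) x) • α i) - (2 * B (α i) (x - (2 * B (α i) x) • α i)) • α i = x
  exact refl_formula_invol i x

def reflEquiv (i : Fin 3) : V ≃ₗ[ℝ] V := LinearEquiv.ofInvolutive (reflMap i) (reflMap_invol i)

lemma reflEquiv_apply (i : Fin 3) (x : V) : reflEquiv i x = x - (2 * B (α i) x) • α i := rfl

lemma reflEquiv_mem_W (i : Fin 3) : reflEquiv i ∈ W :=
  Subgroup.subset_closure ⟨i, fun x => rfl⟩

lemma neg_root {v : V} (hv : v ∈ Φ) : -v ∈ Φ := by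
  obtain ⟨w, hw, i, rfl⟩ := hv
  refine ⟨w * reflEquiv i, mul_mem hw (reflEquiv_mem_W i), i, ?_⟩
  have h1 : reflEquiv i (α i) = -α i := by
    rw [reflEquiv_apply, B_alpha_alpha]
    module
  have : (w * reflEquiv i) (α i) = w (reflEquiv i (α i)) := rfl
  rw [this, h1, map_neg]

lemma reflect_root {u v : V} (hu : u ∈ Φ) (hv : v ∈ Φ) : u - (2 * B v u) • v ∈ Φ := by
  obtain ⟨w, hw, i, rfl⟩ := hv
  obtain ⟨w', hw', j, rfl⟩ := hu
  set g : V ≃ₗ[ℝ] V := w * reflEquiv i * w⁻¹ with hg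
  have hgW : g ∈ W := mul_mem (mul_mem hw (reflEquiv_mem_W i)) (inv_mem hw)
  have happ : g (w' (α j)) = w' (α j) - (2 * B (w (α i)) (w' (α j))) • (w (α i)) := by
    have e1 : g (w' (α j)) = w (reflEquiv i (w.symm (w' (α j)))) := rfl
    rw [e1, reflEquiv_apply, map_sub, map_smul, w.apply_symm_apply]
    congr 2
    have := w_preserves_B hw (α i) (w.symm (w' (α j)))
    rw [w.apply_symm_apply] at this
    rw [← this]
  refine ⟨g * w', mul_mem hgW hw', j, ?_⟩
  have : (g * w') (α j) = g (w' (α j)) := rfl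
  rw [this, happ]

end Aux

namespace Aux

lemma nnspan_delta : nnspan Δ = {x : V | ∀ i, 0 ≤ x i} := by
  apply Set.Subset.antisymm
  · intro x hx
    have : ∀ y ∈ Submodule.span ℝ≥0 Δ, ∀ i, (0:ℝ) ≤ y i := by
      intro y hy
      refine Submodule.span_induction ?_ ?_ ?_ ?_ hy
      · rintro z ⟨i, rfl⟩ j
        by_cases h : j = i <;> simp [α, Pi.single_apply, h]
      · intro i; simp
      · intro y z _ _ hy hz i
        have := add_nonneg (hy i) (hz i)
        simpa using this
      · intro c y _ hy i
        rw [NNReal.smul_def, Pi.smul_apply, smul_eq_mul]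
        exact mul_nonneg c.2 (hy i)
    exact this x hx
  · intro x hx
    have : x = ∑ i : Fin 3, (⟨x i, hx i⟩ : ℝ≥0) • α i := by
      funext j
      rw [Finset.sum_apply]
      have : ∀ i : Fin 3, ((⟨x i, hx i⟩ : ℝ≥0) • α i) j = x i * (if j = i then 1 else 0) := by
        intro i
        show x i * α i j = _
        rw [α, Pi.single_apply]
      simp only [this]
      fin_cases j <;> simp [Fin.sum_univ_three, Fin.ext_iff]
    rw [this]
    exact Submodule.sum_mem _ fun i _ =>
      Submodule.smul_mem _ _ (Submodule.subset_span ⟨i, rfl⟩)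

lemma phipos_nonneg {v : V} (hv : v ∈ Φpos) : ∀ i, 0 ≤ v i := by
  have := hv.2
  rw [nnspan_delta] at this
  exact this

lemma phipos_hsum {v : V} (hv : v ∈ Φpos) : ∃ n : ℤ, Odd n ∧ hsum v = n ∧ 1 ≤ n := by
  obtain ⟨n, hodd, hn⟩ := root_hsum_odd hv.1
  refine ⟨n, hodd, hn, ?_⟩
  have h0 : (0:ℝ) ≤ hsum v :=
    add_nonneg (add_nonneg (phipos_nonneg hv 0) (phipos_nonneg hv 1)) (phipos_nonneg hv 2)
  rw [hn] at h0
  have : (0:ℤ) ≤ n := by exact_mod_cast h0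
  obtain ⟨k, hk⟩ := hodd
  omega

lemma phipos_hsum_ge_one {v : V} (hv : v ∈ Φpos) : 1 ≤ hsum v := by
  obtain ⟨n, _, hn, h1⟩ := phipos_hsum hv
  rw [hn]; exact_mod_cast h1

lemma ne_zero_of_phipos {v : V} (hv : v ∈ Φpos) : v ≠ 0 := by
  intro h
  have := root_Q hv.1
  rw [h, Q_zero] at this
  norm_num at this

/-- Proportional positive roots are equal. -/
lemma prop_eq {u v : V} (hu : u ∈ Φpos) (hv : v ∈ Φpos) {c : ℝ} (h : u = c • v) : u = v := by
  have hq : Q u = c^2 * Q v := by rw [h, Q_smul]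
  rw [root_Q hu.1, root_Q hv.1] at hq
  have hc : (c - 1) * (c + 1) = 0 := by nlinarith
  rcases mul_eq_zero.1 hc with h1 | h1
  · rw [show c = 1 by linarith] at h; simpa using h
  · exfalso
    have hc1 : c = -1 := by linarith
    rw [hc1] at h
    have hveq : v = 0 := by
      funext i
      have h1 : u i = -(v i) := by rw [h]; simp
      have := phipos_nonneg hu i
      have := phipos_nonneg hv i
      simp only [Pi.zero_apply]
      linarith [h1 ▸ phipos_nonneg hu i]
    exact ne_zero_of_phipos hv hveq

lemma nnspan_mono {X Y : Set V} (h : X ⊆ Y) : nnspan X ⊆ nnspan Y :=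
  Submodule.span_mono h

lemma mem_nnspan_pair {X : Set V} {s t : V} (hs : s ∈ X) (ht : t ∈ X) {c1 c2 : ℝ}
    (hc1 : 0 ≤ c1) (hc2 : 0 ≤ c2) : c1 • s + c2 • t ∈ nnspan X := by
  have e1 : (⟨c1, hc1⟩ : ℝ≥0) • s = c1 • s := rfl
  have e2 : (⟨c2, hc2⟩ : ℝ≥0) • t = c2 • t := rfl
  rw [← e1, ← e2]
  exact Submodule.add_mem _ (Submodule.smul_mem _ _ (Submodule.subset_span hs))
    (Submodule.smul_mem _ _ (Submodule.subset_span ht))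

lemma pair_indep {u v : V} (hu : u ∈ Φpos) (hv : v ∈ Φpos) (hne : u ≠ v) :
    LinearIndependent ℝ ![u, v] := by
  rw [LinearIndependent.pair_iff]
  intro s t hst
  by_cases ht : t = 0
  · subst ht
    refine ⟨?_, rfl⟩
    by_contra hs
    have : u = 0 := by
      have := hst
      simp only [add_zero, zero_smul] at this
      exact (smul_eq_zero.1 this).resolve_left hs
    exact ne_zero_of_phipos hu this
  · exfalso
    have hveq : v = (-s/t) • u := by
      have : t • v = (-s) • u := by
        rw [neg_smul]
        linear_combination (norm := module) hst
      calc v = (t⁻¹ * t) • v := by rw [inv_mul_cancel₀ ht, one_smul]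
      _ = t⁻¹ • ((-s) • u) := by rw [mul_smul, this]
      _ = (-s/t) • u := by rw [← mul_smul]; congr 1; field_simp
    exact hne ((prop_eq hv hu hveq).symm)

lemma coords_unique {u v : V} (hind : LinearIndependent ℝ ![u, v]) {a b c d : ℝ}
    (h : a • u + b • v = c • u + d • v) : a = c ∧ b = d := by
  rw [LinearIndependent.pair_iff] at hind
  have := hind (a - c) (b - d) (by linear_combination (norm := module) h)
  constructor <;> [linarith [this.1]; linarith [this.2]]

lemma coords_exist {H : Submodule ℝ V} (h2 : Module.finrank ℝ H = 2) {u v : V}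
    (hu : u ∈ H) (hv : v ∈ H) (hind : LinearIndependent ℝ ![u, v]) {s : V} (hs : s ∈ H) :
    ∃ a b : ℝ, s = a • u + b • v := by
  have hr : Set.range ![u, v] = ({u, v} : Set V) := by
    ext x
    simp only [Set.mem_range, Set.mem_insert_iff, Set.mem_singleton_iff]
    constructor
    · rintro ⟨i, rfl⟩
      fin_cases i
      · exact Or.inl rfl
      · exact Or.inr rfl
    · rintro (rfl | rfl)
      · exact ⟨0, rfl⟩
      · exact ⟨1, rfl⟩
  have hle : Submodule.span ℝ {u, v} ≤ H := by
    rw [Submodule.span_le]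
    rintro x (rfl | rfl)
    · exact hu
    · simpa using hv
  have hfr : Module.finrank ℝ (Submodule.span ℝ ({u, v} : Set V)) = 2 := by
    rw [← hr, finrank_span_eq_card hind, Fintype.card_fin]
  have heq : Submodule.span ℝ ({u, v} : Set V) = H :=
    Submodule.eq_of_le_of_finrank_le hle (by rw [h2, hfr])
  have : s ∈ Submodule.span ℝ ({u, v} : Set V) := heq.symm ▸ hs
  obtain ⟨a, b, hab⟩ := Submodule.mem_span_pair.1 this
  exact ⟨a, b, hab.symm⟩

end Aux

namespace Aux

/-- The positive part of the linear subsystem cut out by `H`. -/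
def Ssys (H : Submodule ℝ V) : Set V := ((H : Set V) ∩ Φ) ∩ Φpos

lemma Ssys_H {H : Submodule ℝ V} {s : V} (hs : s ∈ Ssys H) : s ∈ H := hs.1.1
lemma Ssys_phi {H : Submodule ℝ V} {s : V} (hs : s ∈ Ssys H) : s ∈ Φ := hs.1.2
lemma Ssys_pos {H : Submodule ℝ V} {s : V} (hs : s ∈ Ssys H) : s ∈ Φpos := hs.2

/-- Not proportional: distinct elements of `Ssys`. -/
lemma Ssys_not_prop {H : Submodule ℝ V} {s μ : V} (hs : s ∈ Ssys H) (hμ : μ ∈ Ssys H)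
    (hne : s ≠ μ) (c : ℝ) (h : s = c • μ) : False :=
  hne (prop_eq (Ssys_pos hs) (Ssys_pos hμ) h)

/-- Reflecting an element of `Ssys H` in a relatively simple root stays in `Ssys H`. -/
lemma refl_in_S {H : Submodule ℝ V} {μ s : V} (hμ : μ ∈ Ssys H)
    (hμsimple : μ ∉ nnspan (Ssys H \ {μ})) (hs : s ∈ Ssys H) (hne : s ≠ μ) :
    (s - (2 * B μ s) • μ) ∈ Ssys H ∧ (s - (2 * B μ s) • μ) ≠ μ := by
  set c : ℝ := B μ s with hc
  set t : V := s - (2 * c) • μ with ht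
  have htΦ : t ∈ Φ := reflect_root (Ssys_phi hs) (Ssys_phi hμ)
  have htH : t ∈ H := Submodule.sub_mem _ (Ssys_H hs) (Submodule.smul_mem _ _ (Ssys_H hμ))
  have htne : t ≠ 0 := by
    intro h0
    exact Ssys_not_prop hs hμ hne (2*c) (by rw [← sub_eq_zero]; exact h0)
  have tnonneg : (∀ i, 0 ≤ t i) → (t ∈ Ssys H ∧ t ≠ μ) := by
    intro hpos
    have htpos : t ∈ Φpos := ⟨htΦ, by rw [nnspan_delta]; exact hpos⟩
    refine ⟨⟨⟨htH, htΦ⟩, htpos⟩, ?_⟩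
    intro heq
    refine Ssys_not_prop hs hμ hne (1 + 2*c) ?_
    have h5 : s = t + (2*c) • μ := by rw [ht]; module
    rw [heq] at h5
    rw [h5]; module
  rcases root_sign htΦ with hpos | hneg
  · exact tnonneg hpos
  · exfalso
    have hcpos : 0 < c := by
      by_contra hcle
      push_neg at hcle
      have : ∀ i, t i = 0 := by
        intro i
        have h1 : t i = s i - (2*c) * μ i := by
          rw [ht]; simp [Pi.sub_apply, Pi.smul_apply, smul_eq_mul]
        have h2 : 0 ≤ s i := phipos_nonneg (Ssys_pos hs) i
        have h3 : 0 ≤ μ i := phipos_nonneg (Ssys_pos hμ) i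
        have h4 : t i ≤ 0 := hneg i
        nlinarith [mul_nonneg (neg_nonneg.2 hcle) h3]
      exact htne (funext this)
    have hmt : -t ∈ Ssys H := by
      refine ⟨⟨Submodule.neg_mem _ htH, neg_root htΦ⟩, ⟨neg_root htΦ, ?_⟩⟩
      rw [nnspan_delta]
      intro i
      simpa using hneg i
    have hmtne : -t ≠ μ := by
      intro heq
      refine Ssys_not_prop hs hμ hne (2*c - 1) ?_
      have h5 : s = t + (2*c) • μ := by rw [ht]; module
      have h6 : t = -μ := by rw [← heq]; simp
      rw [h6] at h5
      rw [h5]; module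
    apply hμsimple
    have hkey : μ = (1/(2*c)) • s + (1/(2*c)) • (-t) := by
      have h1 : s + (-t) = (2*c) • μ := by rw [ht]; module
      have h2 : (1/(2*c)) • (s + (-t)) = (1/(2*c)) • ((2*c) • μ) := by rw [h1]
      rw [smul_add] at h2
      rw [h2, ← mul_smul]
      field_simp
      rw [one_smul]
    have hs' : s ∈ Ssys H \ {μ} := ⟨hs, hne⟩
    have hmt' : -t ∈ Ssys H \ {μ} := ⟨hmt, hmtne⟩
    have hmem : (1/(2*c)) • s + (1/(2*c)) • (-t) ∈ nnspan (Ssys H \ {μ}) :=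
      mem_nnspan_pair hs' hmt' (by positivity) (by positivity)
    rw [← hkey] at hmem
    exact hmem

end Aux

namespace Aux

lemma coords_nonneg {H : Submodule ℝ V} (h2 : Module.finrank ℝ H = 2) {μ ν : V}
    (hμ : μ ∈ Ssys H) (hν : ν ∈ Ssys H)
    (hμsimple : μ ∉ nnspan (Ssys H \ {μ})) (hνsimple : ν ∉ nnspan (Ssys H \ {ν}))
    (hμν : μ ≠ ν) {s : V} (hs : s ∈ Ssys H) :
    ∃ a b : ℝ, s = a • μ + b • ν ∧ 0 ≤ a ∧ 0 ≤ b ∧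
      (s ≠ μ → s ≠ ν → (0 < a ∧ 0 < b)) := by
  have hind := pair_indep (Ssys_pos hμ) (Ssys_pos hν) hμν
  obtain ⟨a, b, hab⟩ := coords_exist h2 (Ssys_H hμ) (Ssys_H hν) hind (Ssys_H hs)
  have hhs : hsum s = a * hsum μ + b * hsum ν := by rw [hab, hsum_comb]
  have h1μ : 1 ≤ hsum μ := phipos_hsum_ge_one (Ssys_pos hμ)
  have h1ν : 1 ≤ hsum ν := phipos_hsum_ge_one (Ssys_pos hν)
  have h1s : 1 ≤ hsum s := phipos_hsum_ge_one (Ssys_pos hs)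
  have ha : 0 ≤ a := by
    by_contra ha
    push_neg at ha
    have hb : 0 < b := by nlinarith
    have hsν : s ≠ ν := by
      intro heq
      rw [heq] at hab
      have huv := coords_unique hind (c := 0) (d := 1)
        (h := by rw [← hab]; module)
      linarith [huv.1]
    have hkey : ν = (1/b) • s + (-a/b) • μ := by
      have h3 : b • ν = s - a • μ := by rw [hab]; module
      have h4 : (1/b) • (b • ν) = (1/b) • (s - a • μ) := by rw [h3]
      rw [← mul_smul] at h4
      rw [show (1/b) * b = 1 by field_simp, one_smul] at h4
      rw [h4, smul_sub, ← mul_smul]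
      module
    exfalso
    apply hνsimple
    have hs' : s ∈ Ssys H \ {ν} := ⟨hs, hsν⟩
    have hμ' : μ ∈ Ssys H \ {ν} := ⟨hμ, hμν⟩
    have hmem : (1/b) • s + (-a/b) • μ ∈ nnspan (Ssys H \ {ν}) :=
      mem_nnspan_pair hs' hμ' (div_nonneg (by norm_num) (by linarith))
        (div_nonneg (by linarith) (by linarith))
    rw [← hkey] at hmem
    exact hmem
  have hb : 0 ≤ b := by
    by_contra hb
    push_neg at hb
    have ha' : 0 < a := by nlinarith
    have hsμ : s ≠ μ := by
      intro heq
      rw [heq] at hab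
      have huv := coords_unique hind (c := 1) (d := 0)
        (h := by rw [← hab]; module)
      linarith [huv.2]
    have hkey : μ = (1/a) • s + (-b/a) • ν := by
      have h3 : a • μ = s - b • ν := by rw [hab]; module
      have h4 : (1/a) • (a • μ) = (1/a) • (s - b • ν) := by rw [h3]
      rw [← mul_smul] at h4
      rw [show (1/a) * a = 1 by field_simp, one_smul] at h4
      rw [h4, smul_sub, ← mul_smul]
      module
    exfalso
    apply hμsimple
    have hs' : s ∈ Ssys H \ {μ} := ⟨hs, hsμ⟩
    have hν' : ν ∈ Ssys H \ {μ} := ⟨hν, fun h => hμν h.symm⟩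
    have hmem : (1/a) • s + (-b/a) • ν ∈ nnspan (Ssys H \ {μ}) :=
      mem_nnspan_pair hs' hν' (div_nonneg (by norm_num) (by linarith))
        (div_nonneg (by linarith) (by linarith))
    rw [← hkey] at hmem
    exact hmem
  refine ⟨a, b, hab, ha, hb, fun hsμ hsν => ?_⟩
  constructor
  · rcases lt_or_eq_of_le ha with h | h
    · exact h
    · exfalso
      apply Ssys_not_prop hs hν hsν b
      rw [hab, ← h]; module
  · rcases lt_or_eq_of_le hb with h | h
    · exact h
    · exfalso
      apply Ssys_not_prop hs hμ hsμ a
      rw [hab, ← h]; module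

end Aux

namespace Aux

lemma claimD {H : Submodule ℝ V} (h2 : Module.finrank ℝ H = 2) {μ ν : V}
    (hμ : μ ∈ Ssys H) (hν : ν ∈ Ssys H)
    (hμs : μ ∉ nnspan (Ssys H \ {μ})) (hνs : ν ∉ nnspan (Ssys H \ {ν}))
    (hμν : μ ≠ ν) :
    ∀ n : ℕ, ∀ s, s ∈ Ssys H → s ≠ μ → s ≠ ν → hsum s ≤ n →
      hsum μ + hsum ν ≤ hsum s := by
  intro n
  induction n with
  | zero =>
    intro s hs _ _ hle
    have := phipos_hsum_ge_one (Ssys_pos hs)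
    push_cast at hle
    linarith
  | succ n ih =>
    have core : ∀ (μ' ν' : V), μ' ∈ Ssys H → ν' ∈ Ssys H →
        (ν' ∉ nnspan (Ssys H \ {ν'})) →
        (∀ s', s' ∈ Ssys H → s' ≠ μ' → s' ≠ ν' → hsum s' ≤ (n:ℝ) →
          hsum μ' + hsum ν' ≤ hsum s') →
        ∀ s, s ∈ Ssys H → s ≠ μ' → s ≠ ν' → hsum s ≤ ((n+1 : ℕ) : ℝ) → 0 < B ν' s →
        hsum μ' + hsum ν' ≤ hsum s := by
      intro μ' ν' hμ' hν' hνs' ih' s hs hsμ hsν hle hBpos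
      obtain ⟨k, hkodd, hk⟩ := B_roots_odd (Ssys_phi hν') (Ssys_phi hs)
      have hk1 : (1:ℝ) ≤ B ν' s := by
        have hk0 : (0:ℤ) < k := by
          rw [hk] at hBpos
          exact_mod_cast hBpos
        rw [hk]
        exact_mod_cast hk0
      obtain ⟨ht, htν⟩ := refl_in_S hν' hνs' hs hsν
      have hts : hsum (s - (2 * B ν' s) • ν') = hsum s - 2 * B ν' s * hsum ν' :=
        hsum_sub_smul _ _ _
      have h1ν : 1 ≤ hsum ν' := phipos_hsum_ge_one (Ssys_pos hν')
      have h1μ : 1 ≤ hsum μ' := phipos_hsum_ge_one (Ssys_pos hμ')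
      have h1t : 1 ≤ hsum (s - (2 * B ν' s) • ν') := phipos_hsum_ge_one (Ssys_pos ht)
      have hprod : 2 ≤ 2 * B ν' s * hsum ν' := by nlinarith
      by_cases htμ : s - (2 * B ν' s) • ν' = μ'
      · have hteq : hsum (s - (2 * B ν' s) • ν') = hsum μ' := by rw [htμ]
        nlinarith
      · have hbound : hsum (s - (2 * B ν' s) • ν') ≤ (n:ℝ) := by
          push_cast at hle
          linarith
        have := ih' _ ht htμ htν hbound
        linarith
    intro s hs hsμ hsν hle
    obtain ⟨a, b, hab, _, _, hstrict⟩ := coords_nonneg h2 hμ hν hμs hνs hμν hs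
    obtain ⟨hapos, hbpos⟩ := hstrict hsμ hsν
    have hQ1 : (1:ℝ) = a * B μ s + b * B ν s := by
      have h0 : Q s = 1 := root_Q (Ssys_phi hs)
      have h1 : Q s = B s (a • μ + b • ν) := by rw [Q]; exact congrArg (B s) hab
      rw [B_comb_right, B_symm s μ, B_symm s ν] at h1
      linarith [h0, h1]
    by_cases hy : 0 < B ν s
    · exact core μ ν hμ hν hνs ih s hs hsμ hsν hle hy
    · push_neg at hy
      have hyμ : 0 < B μ s := by
        by_contra hyμ
        push_neg at hyμ
        nlinarith [hQ1]
      have := core ν μ hν hμ hμs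
        (fun s' hs' h1 h2 hb' => by
          have := ih s' hs' h2 h1 hb'
          linarith)
        s hs hsν hsμ hle hyμ
      linarith

end Aux

namespace Aux

lemma main_ind {H : Submodule ℝ V} (h2 : Module.finrank ℝ H = 2) {β : V}
    (hβ : β ∈ Ssys H) (hβs : β ∉ nnspan (Ssys H \ {β})) :
    ∀ n : ℕ, ∀ γ, γ ∈ Ssys H → γ ∈ nnspan (Ssys H \ {γ}) → hsum γ ≤ n →
      hsum β < hsum γ := by
  intro n
  induction n with
  | zero =>
    intro γ hγ _ hle
    have := phipos_hsum_ge_one (Ssys_pos hγ)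
    push_cast at hle
    linarith
  | succ n ih =>
    intro γ hγ hγn hle
    have hγβ : γ ≠ β := by
      rintro rfl
      exact hβs hγn
    have h1β : 1 ≤ hsum β := phipos_hsum_ge_one (Ssys_pos hβ)
    have h1γ : 1 ≤ hsum γ := phipos_hsum_ge_one (Ssys_pos hγ)
    obtain ⟨k, hkodd, hk⟩ := B_roots_odd (Ssys_phi hβ) (Ssys_phi hγ)
    have hkne : k ≠ 0 := by
      obtain ⟨j, hj⟩ := hkodd
      omega
    rcases lt_or_gt_of_ne hkne with hkneg | hkpos
    · -- k ≤ -1 : the interesting case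
      have hkle : B β γ ≤ -1 := by
        rw [hk]
        have : k ≤ -1 := by omega
        exact_mod_cast this
      -- extract ρ beyond γ from the nonneg combination
      have hind := pair_indep (Ssys_pos hβ) (Ssys_pos hγ) (fun h => hγβ h.symm)
      obtain ⟨N, f, g, hcomb⟩ := Submodule.mem_span_set'.1 hγn
      have hcoords : ∀ i : Fin N, ∃ p q : ℝ, (g i : V) = p • β + q • γ := fun i =>
        coords_exist h2 (Ssys_H hβ) (Ssys_H hγ) hind (Ssys_H (g i).2.1)
      choose p q hpq using hcoords
      have hsplit : γ = (∑ i, (f i : ℝ) * p i) • β + (∑ i, (f i : ℝ) * q i) • γ := by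
        have e1 : ∀ i : Fin N, (f i : ℝ≥0) • (g i : V) =
            ((f i : ℝ) * p i) • β + ((f i : ℝ) * q i) • γ := by
          intro i
          rw [NNReal.smul_def, hpq i, smul_add, ← mul_smul, ← mul_smul]
        have hsplit' : (∑ i : Fin N, f i • (g i : V)) =
            (∑ i, (f i : ℝ) * p i) • β + (∑ i, (f i : ℝ) * q i) • γ := by
          rw [Finset.sum_congr rfl (fun i _ => e1 i), Finset.sum_add_distrib,
            ← Finset.sum_smul, ← Finset.sum_smul]
        exact hcomb.symm.trans hsplit'
      have huv := coords_unique hind (a := ∑ i, (f i : ℝ) * p i) (b := ∑ i, (f i : ℝ) * q i)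
        (c := 0) (d := 1) (h := by rw [← hsplit]; module)
      have hsump : (∑ i, (f i : ℝ) * p i) = 0 := huv.1
      have hsumq : (∑ i, (f i : ℝ) * q i) = 1 := huv.2
      have hexists : ∃ i : Fin N, 0 < (f i : ℝ) ∧ p i < 0 := by
        by_contra hno
        push_neg at hno
        have hterms : ∀ i ∈ Finset.univ, 0 ≤ (f i : ℝ) * p i := by
          intro i _
          rcases eq_or_lt_of_le (NNReal.coe_nonneg (f i)) with h0 | h0
          · rw [← h0]; simp
          · exact mul_nonneg (le_of_lt h0) (hno i h0)
        have hzero : ∀ i ∈ Finset.univ, (f i : ℝ) * p i = 0 :=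
          (Finset.sum_eq_zero_iff_of_nonneg hterms).1 hsump
        have hfpos : ∃ i : Fin N, 0 < (f i : ℝ) := by
          by_contra hf0
          push_neg at hf0
          have : ∀ i ∈ Finset.univ, (f i : ℝ) * q i = 0 := by
            intro i _
            have : (f i : ℝ) = 0 := le_antisymm (hf0 i) (NNReal.coe_nonneg (f i))
            rw [this, zero_mul]
          rw [Finset.sum_congr rfl this] at hsumq
          simp at hsumq
        obtain ⟨i, hfi⟩ := hfpos
        have hpi : p i = 0 := by
          have := hzero i (Finset.mem_univ i)
          rcases mul_eq_zero.1 this with h | h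
          · exact absurd h (ne_of_gt hfi)
          · exact h
        have : (g i : V) = q i • γ := by
          rw [hpq i, hpi]; module
        exact (g i).2.2 (prop_eq (Ssys_pos (g i).2.1) (Ssys_pos hγ) this)
      obtain ⟨i0, hf0, hP⟩ := hexists
      set ρ : V := (g i0 : V) with hρdef
      have hρS : ρ ∈ Ssys H := (g i0).2.1
      have hργ : ρ ≠ γ := (g i0).2.2
      have hρeq : ρ = p i0 • β + q i0 • γ := hpq i0
      have h1ρ : 1 ≤ hsum ρ := phipos_hsum_ge_one (Ssys_pos hρS)
      have hhρ : hsum ρ = p i0 * hsum β + q i0 * hsum γ := by rw [hρeq, hsum_comb]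
      have hG : 0 < q i0 := by nlinarith
      have hQρ : 1 = (p i0)^2 + (q i0)^2 + 2 * (p i0) * (q i0) * B β γ := by
        have h0 : Q ρ = 1 := root_Q (Ssys_phi hρS)
        have h1 : Q ρ = (p i0)^2 * Q β + (q i0)^2 * Q γ + 2*(p i0)*(q i0)*B β γ := by
          rw [hρeq]; exact Q_comb _ _ _ _
        rw [root_Q (Ssys_phi hβ), root_Q (Ssys_phi hγ)] at h1
        nlinarith [h0, h1]
      -- hsum ρ < hsum γ
      have hPG : (q i0 - p i0) ≤ 1 := by
        nlinarith [mul_nonneg (mul_nonneg (le_of_lt (neg_pos.2 hP)) (le_of_lt hG))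
          (by linarith : (0:ℝ) ≤ -(B β γ) - 1), sq_nonneg (q i0 - p i0)]
      have hρltγ : hsum ρ < hsum γ := by nlinarith
      by_cases hρn : ρ ∈ nnspan (Ssys H \ {ρ})
      · -- ρ not relatively simple: induction
        have hbound : hsum ρ ≤ (n:ℝ) := by
          obtain ⟨nρ, _, hnρ, hnρ1⟩ := phipos_hsum (Ssys_pos hρS)
          obtain ⟨nγ, _, hnγ, _⟩ := phipos_hsum (Ssys_pos hγ)
          have h1 : nρ < nγ := by
            rw [hnρ, hnγ] at hρltγ
            exact_mod_cast hρltγ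
          have h2' : (nγ:ℝ) ≤ ((n+1 : ℕ):ℝ) := by rw [← hnγ]; exact hle
          have h3 : nγ ≤ (n:ℤ) + 1 := by exact_mod_cast h2'
          rw [hnρ]
          have : nρ ≤ (n:ℤ) := by omega
          exact_mod_cast this
        have := ih ρ hρS hρn hbound
        linarith
      · -- ρ relatively simple: use claimD with the pair (β, ρ)
        have hρβ : ρ ≠ β := by
          intro heq
          rw [heq] at hρeq
          have huv2 := coords_unique hind (a := 1) (b := 0)
            (h := by rw [← hρeq]; module)
          linarith [huv2.1]
        obtain ⟨nγ, _, hnγ, _⟩ := phipos_hsum (Ssys_pos hγ)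
        have := claimD h2 hβ hρS hβs hρn (Ne.symm hρβ) (n+1) γ hγ hγβ
          (fun h => hργ h.symm) hle
        linarith
    · -- k ≥ 1 : reflect γ in β
      have hkge : 1 ≤ B β γ := by
        rw [hk]
        have : 1 ≤ k := by omega
        exact_mod_cast this
      obtain ⟨ht, _⟩ := refl_in_S hβ hβs hγ hγβ
      have hts : hsum (γ - (2 * B β γ) • β) = hsum γ - 2 * B β γ * hsum β :=
        hsum_sub_smul _ _ _
      have h1t : 1 ≤ hsum (γ - (2 * B β γ) • β) := phipos_hsum_ge_one (Ssys_pos ht)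
      nlinarith

end Aux

/-- In a rank-2 linear subsystem, a relatively simple positive root has strictly
smaller height than any non-relatively-simple positive root. -/
theorem relatively_simple_has_smaller_height (H : Submodule ℝ V)
    (h2 : Module.finrank ℝ H = 2)
    (hspan : H = Submodule.span ℝ ((H : Set V) ∩ Φ))
    (β γ : V)
    (hβ : β ∈ ((H : Set V) ∩ Φ) ∩ Φpos) (hγ : γ ∈ ((H : Set V) ∩ Φ) ∩ Φpos)
    (hβsimple : β ∉ nnspan ((((H : Set V) ∩ Φ) ∩ Φpos) \ {β}))
    (hγnotsimple : γ ∈ nnspan ((((H : Set V) ∩ Φ) ∩ Φpos) \ {γ})) :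
    (∑ i, β i) < (∑ i, γ i) := by
  have hβS : β ∈ Aux.Ssys H := hβ
  have hγS : γ ∈ Aux.Ssys H := hγ
  have hβs : β ∉ nnspan (Aux.Ssys H \ {β}) := hβsimple
  have hγn : γ ∈ nnspan (Aux.Ssys H \ {γ}) := hγnotsimple
  obtain ⟨nγ, _, hnγ, hnγ1⟩ := Aux.phipos_hsum (Aux.Ssys_pos hγS)
  have h' : (nγ : ℝ) ≤ ((nγ.toNat : ℕ) : ℝ) := by exact_mod_cast Int.self_le_toNat nγ
  have hle : Aux.hsum γ ≤ ((nγ.toNat : ℕ) : ℝ) := by rw [hnγ]; exact h'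
  have hmain := Aux.main_ind h2 hβS hβs nγ.toNat γ hγS hγn hle
  rw [Aux.hsum_eq β, Aux.hsum_eq γ]
  exact hmain
end
end
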